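/- arXiv:2509.19901 — 7 statements merged into one kernel-verified Lean document; each statement's English description precedes it below -/
import Mathlib

section
/- Let X be a finite nonempty index set and for each x ∈ X let D_x : Δ_K → ℝ be continuous and concave. Define F(p,μ) = Σ_{x∈X} μ_x D_x(p) for (p,μ) ∈ Δ_K × Δ_X. Then F admits a saddle point: there exists (p*,μ*) ∈ Δ_K × Δ_X such that F(p,μ*) ≤ F(p*,μ*) ≤ F(p*,μ) for all p ∈ Δ_K and μ ∈ Δ_X; consequently sup_{p∈Δ_K} inf_{μ∈Δ_X} F(p,μ) = inf_{μ∈Δ_X} sup_{p∈Δ_K} F(p,μ), and both are attained. -/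
/-- For a finite nonempty index set `X` and continuous concave functions
`D x : Δ_K → ℝ`, the payoff `F p μ = ∑ x, μ x * D x p` admits a saddle point on
`Δ_K × Δ_X`; consequently the sup-inf and inf-sup values coincide and both are attained. -/
theorem stmt_0 {K : ℕ} (hK : 0 < K) {X : Type*} [Fintype X] [Nonempty X]
    (D : X → (Fin K → ℝ) → ℝ)
    (hcont : ∀ x, ContinuousOn (D x) (stdSimplex ℝ (Fin K)))
    (hconc : ∀ x, ConcaveOn ℝ (stdSimplex ℝ (Fin K)) (D x))
    (F : (Fin K → ℝ) → (X → ℝ) → ℝ)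
    (hF : ∀ p μ, F p μ = ∑ x, μ x * D x p) :
    ∃ pstar ∈ stdSimplex ℝ (Fin K), ∃ mustar ∈ stdSimplex ℝ X,
      (∀ p ∈ stdSimplex ℝ (Fin K), F p mustar ≤ F pstar mustar) ∧
      (∀ μ ∈ stdSimplex ℝ X, F pstar mustar ≤ F pstar μ) ∧
      (⨆ p : stdSimplex ℝ (Fin K), ⨅ μ : stdSimplex ℝ X, F p.1 μ.1)
        = (⨅ μ : stdSimplex ℝ X, ⨆ p : stdSimplex ℝ (Fin K), F p.1 μ.1) ∧
      (⨅ μ : stdSimplex ℝ X, F pstar μ.1)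
        = (⨆ p : stdSimplex ℝ (Fin K), ⨅ μ : stdSimplex ℝ X, F p.1 μ.1) ∧
      (⨆ p : stdSimplex ℝ (Fin K), F p.1 mustar)
        = (⨅ μ : stdSimplex ℝ X, ⨆ p : stdSimplex ℝ (Fin K), F p.1 μ.1) := by
  classical
  set S := stdSimplex ℝ (Fin K) with hS
  have hScpt : IsCompact S := isCompact_stdSimplex ℝ _
  have : Nonempty (Fin K) := ⟨⟨0, hK⟩⟩
  have hSne : S.Nonempty := ⟨Pi.single ⟨0, hK⟩ 1, single_mem_stdSimplex ℝ _⟩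
  -- the min function
  set g : (Fin K → ℝ) → ℝ :=
    fun p => Finset.univ.inf' Finset.univ_nonempty (fun x : X => D x p) with hg
  have hgcont : ContinuousOn g S :=
    ContinuousOn.finset_inf'_apply Finset.univ_nonempty (fun x _ => hcont x)
  obtain ⟨pstar, hpstarS, hpstarmax⟩ := hScpt.exists_isMaxOn hSne hgcont
  set v : ℝ := g pstar with hv
  have hgle : ∀ p ∈ S, g p ≤ v := fun p hp => hpstarmax hp
  have hvle : ∀ x : X, v ≤ D x pstar := fun x =>
    Finset.inf'_le _ (Finset.mem_univ x)
  -- the convex sets to separate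
  set C : Set (X → ℝ) := {y | ∃ p ∈ S, ∀ x, y x ≤ D x p} with hC
  set U : Set (X → ℝ) := {y | ∀ x, v < y x} with hU
  have hCconv : Convex ℝ C := by
    rintro y₁ ⟨p₁, hp₁, hy₁⟩ y₂ ⟨p₂, hp₂, hy₂⟩ a b ha hb hab
    refine ⟨a • p₁ + b • p₂, convex_stdSimplex ℝ _ hp₁ hp₂ ha hb hab, fun x => ?_⟩
    have := (hconc x).2 hp₁ hp₂ ha hb hab
    simp only [Pi.add_apply, Pi.smul_apply, smul_eq_mul] at this ⊢
    have h1 : a * y₁ x ≤ a * D x p₁ := mul_le_mul_of_nonneg_left (hy₁ x) ha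
    have h2 : b * y₂ x ≤ b * D x p₂ := mul_le_mul_of_nonneg_left (hy₂ x) hb
    linarith
  have hUconv : Convex ℝ U := by
    have : U = ⋂ x : X, (fun y : X → ℝ => y x) ⁻¹' Set.Ioi v := by
      ext y; simp [hU]
    rw [this]
    exact convex_iInter fun x =>
      (convex_Ioi v).linear_preimage (LinearMap.proj (R := ℝ) (φ := fun _ : X => ℝ) x)
  have hUopen : IsOpen U := by
    have : U = ⋂ x : X, (fun y : X → ℝ => y x) ⁻¹' Set.Ioi v := by
      ext y; simp [hU]
    rw [this]
    exact isOpen_iInter_of_finite fun x => (continuous_apply x).isOpen_preimage _ isOpen_Ioi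
  have hdisj : Disjoint U C := by
    rw [Set.disjoint_left]
    rintro y hyU ⟨p, hp, hyp⟩
    have : v < g p := by
      rw [hg]
      rw [Finset.lt_inf'_iff]
      exact fun x _ => lt_of_lt_of_le (hyU x) (hyp x)
    exact absurd (hgle p hp) (not_le.2 this)
  obtain ⟨f, u, hfU, hfC⟩ := geometric_hahn_banach_open hUconv hUopen hCconv hdisj
  -- coordinates of f
  set c : X → ℝ := fun x => f (Pi.single x 1) with hc
  have hrepr : ∀ y : X → ℝ, f y = ∑ x, y x * c x := by
    intro y
    conv_lhs => rw [pi_eq_sum_univ y]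
    rw [map_sum]
    refine Finset.sum_congr rfl fun x _ => ?_
    rw [map_smul, smul_eq_mul, hc]
    congr 2
    ext j
    simp [Pi.single_apply, eq_comm]
  -- the vector D · pstar lies in C
  have hystar : (fun x => D x pstar) ∈ C := ⟨pstar, hpstarS, fun x => le_rfl⟩
  -- each c x ≤ 0
  have hcle : ∀ x, c x ≤ 0 := by
    intro x
    by_contra hpos
    push_neg at hpos
    set t : ℝ := (f (fun x => D x pstar) - u) / c x + 1 with ht
    set w : X → ℝ := (fun x => D x pstar) - t • (Pi.single x 1 : X → ℝ) with hw
    have hyt : w ∈ C := by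
      refine ⟨pstar, hpstarS, fun x' => ?_⟩
      rw [hw]
      simp only [Pi.sub_apply, Pi.smul_apply, smul_eq_mul]
      have : 0 ≤ t * (Pi.single x 1 : X → ℝ) x' := by
        rcases eq_or_ne x x' with h | h
        · subst h; simp only [Pi.single_eq_same, mul_one]
          rw [ht]
          have h1 : 0 ≤ (f (fun x => D x pstar) - u) / c x := by
            apply div_nonneg _ hpos.le
            have := hfC _ hystar; linarith
          linarith
        · simp [Pi.single_eq_of_ne (Ne.symm h)]
      linarith
    have := hfC _ hyt
    rw [hw, map_sub, map_smul, smul_eq_mul] at this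
    rw [ht] at this
    have hfy := hfC _ hystar
    have hcx : f (Pi.single x 1) = c x := rfl
    rw [hcx] at this
    have hdiv : ((f fun x => D x pstar) - u) / c x * c x = (f fun x => D x pstar) - u :=
      div_mul_cancel₀ _ (ne_of_gt hpos)
    nlinarith [hdiv, hpos, this, hfy]
  -- U is nonempty and f separates, so not all c x vanish
  have hune : (fun _ : X => v + 1) ∈ U := fun x => by simp [hU]
  have hcne : ∃ x, c x ≠ 0 := by
    by_contra hall
    push_neg at hall
    have h0 : ∀ y : X → ℝ, f y = 0 := by
      intro y; rw [hrepr]; simp [hall]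
    have h1 := hfU _ hune
    have h2 := hfC _ hystar
    rw [h0] at h1 h2
    linarith
  set σ : ℝ := ∑ x, c x with hσ
  have hσneg : σ < 0 := by
    rcases lt_or_eq_of_le (Finset.sum_nonpos (fun x _ => hcle x) : σ ≤ 0) with h | h
    · exact h
    · exfalso
      obtain ⟨x, hx⟩ := hcne
      exact hx ((Finset.sum_eq_zero_iff_of_nonpos (fun x _ => hcle x)).1 h x (Finset.mem_univ x))
  -- the optimal mixed strategy
  set mustar : X → ℝ := fun x => c x / σ with hmu
  have hmustarS : mustar ∈ stdSimplex ℝ X := by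
    constructor
    · intro x
      have := div_nonneg (neg_nonneg.2 (hcle x)) (neg_nonneg.2 hσneg.le)
      rwa [neg_div_neg_eq] at this
    · rw [hmu, ← Finset.sum_div, div_self (ne_of_lt hσneg)]
  -- σ • v ≤ u
  have hσv : σ * v ≤ u := by
    apply le_of_forall_pos_lt_add
    intro ε hε
    have ht : (0:ℝ) < ε / (-σ) := div_pos hε (neg_pos.2 hσneg)
    have hz : (fun _ : X => v + ε / (-σ)) ∈ U := fun x => by
      simp only [hU, Set.mem_setOf_eq]; linarith
    have := hfU _ hz
    rw [hrepr] at this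
    have hzval : ∑ x, (v + ε / (-σ)) * c x = (v + ε / (-σ)) * σ := by
      rw [← Finset.mul_sum]
    rw [hzval] at this
    have hσne : σ ≠ 0 := ne_of_lt hσneg
    have hcalc : (v + ε / (-σ)) * σ = σ * v - ε := by
      have h1 : ε / (-σ) * σ = -ε := by
        rw [div_neg, neg_mul, div_mul_cancel₀ _ hσne]
      rw [add_mul, h1]
      ring
    rw [hcalc] at this
    linarith
  -- key inequality: F p mustar ≤ v on S
  have hkey : ∀ p ∈ S, F p mustar ≤ v := by
    intro p hp
    have hmem : (fun x => D x p) ∈ C := ⟨p, hp, fun x => le_rfl⟩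
    have h1 : u ≤ f (fun x => D x p) := hfC _ hmem
    rw [hrepr] at h1
    have h2 : F p mustar = (∑ x, D x p * c x) / σ := by
      rw [hF, Finset.sum_div]
      refine Finset.sum_congr rfl fun x _ => ?_
      rw [hmu]
      ring
    rw [h2, div_le_iff_of_neg hσneg]
    have hcomm : v * σ = σ * v := mul_comm _ _
    linarith
  -- value equality at the saddle point
  have hFv : F pstar mustar = v := by
    refine le_antisymm (hkey pstar hpstarS) ?_
    rw [hF]
    calc v = ∑ x, mustar x * v := by
            rw [← Finset.sum_mul, hmustarS.2, one_mul]
      _ ≤ ∑ x, mustar x * D x pstar :=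
            Finset.sum_le_sum fun x _ =>
              mul_le_mul_of_nonneg_left (hvle x) (hmustarS.1 x)
  -- second saddle inequality
  have hkey2 : ∀ μ ∈ stdSimplex ℝ X, v ≤ F pstar μ := by
    intro μ hμ
    rw [hF]
    calc v = ∑ x, μ x * v := by rw [← Finset.sum_mul, hμ.2, one_mul]
      _ ≤ ∑ x, μ x * D x pstar :=
            Finset.sum_le_sum fun x _ => mul_le_mul_of_nonneg_left (hvle x) (hμ.1 x)
  -- bounds for sups and infs
  have : Nonempty (stdSimplex ℝ X) := ⟨⟨mustar, hmustarS⟩⟩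
  have : Nonempty (stdSimplex ℝ (Fin K)) := ⟨⟨pstar, hpstarS⟩⟩
  -- lower bound for F p · over the simplex
  have hFlow : ∀ p, ∀ μ ∈ stdSimplex ℝ X, g p ≤ F p μ := by
    intro p μ hμ
    rw [hF]
    calc g p = ∑ x, μ x * g p := by rw [← Finset.sum_mul, hμ.2, one_mul]
      _ ≤ ∑ x, μ x * D x p :=
          Finset.sum_le_sum fun x _ =>
            mul_le_mul_of_nonneg_left (Finset.inf'_le _ (Finset.mem_univ x)) (hμ.1 x)
  have hbddBelow : ∀ p : (Fin K → ℝ), BddBelow (Set.range fun μ : stdSimplex ℝ X => F p μ.1) := by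
    intro p
    refine ⟨g p, ?_⟩
    rintro r ⟨μ, rfl⟩
    exact hFlow p μ.1 μ.2
  -- upper bound for F · μ over S
  obtain ⟨M, hM⟩ : ∃ M : X → ℝ, ∀ x, ∀ p ∈ S, D x p ≤ M x := by
    have : ∀ x : X, ∃ Mx : ℝ, ∀ p ∈ S, D x p ≤ Mx := by
      intro x
      obtain ⟨q, hq, hmax⟩ := hScpt.exists_isMaxOn hSne (hcont x)
      exact ⟨D x q, fun p hp => hmax hp⟩
    choose M hM using this
    exact ⟨M, hM⟩
  have hFhigh : ∀ μ ∈ stdSimplex ℝ X, ∀ p ∈ S, F p μ ≤ ∑ x, μ x * M x := by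
    intro μ hμ p hp
    rw [hF]
    exact Finset.sum_le_sum fun x _ => mul_le_mul_of_nonneg_left (hM x p hp) (hμ.1 x)
  have hbddAbove : ∀ μ ∈ stdSimplex ℝ X,
      BddAbove (Set.range fun p : stdSimplex ℝ (Fin K) => F p.1 μ) := by
    intro μ hμ
    refine ⟨∑ x, μ x * M x, ?_⟩
    rintro r ⟨p, rfl⟩
    exact hFhigh μ hμ p.1 p.2
  -- compute the infimum at pstar
  have hinfstar : (⨅ μ : stdSimplex ℝ X, F pstar μ.1) = v := by
    refine le_antisymm ?_ (le_ciInf fun μ => hkey2 μ.1 μ.2)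
    calc (⨅ μ : stdSimplex ℝ X, F pstar μ.1) ≤ F pstar mustar :=
          ciInf_le (hbddBelow pstar) ⟨mustar, hmustarS⟩
      _ = v := hFv
  -- every inner infimum is ≤ v
  have hinfle : ∀ p : stdSimplex ℝ (Fin K), (⨅ μ : stdSimplex ℝ X, F p.1 μ.1) ≤ v := by
    intro p
    calc (⨅ μ : stdSimplex ℝ X, F p.1 μ.1) ≤ F p.1 mustar :=
          ciInf_le (hbddBelow p.1) ⟨mustar, hmustarS⟩
      _ ≤ v := hkey p.1 p.2
  have hsupinf : (⨆ p : stdSimplex ℝ (Fin K), ⨅ μ : stdSimplex ℝ X, F p.1 μ.1) = v := by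
    refine le_antisymm (ciSup_le hinfle) ?_
    have hb : BddAbove (Set.range fun p : stdSimplex ℝ (Fin K) =>
        ⨅ μ : stdSimplex ℝ X, F p.1 μ.1) := by
      refine ⟨v, ?_⟩; rintro r ⟨p, rfl⟩; exact hinfle p
    calc v = ⨅ μ : stdSimplex ℝ X, F pstar μ.1 := hinfstar.symm
      _ ≤ ⨆ p : stdSimplex ℝ (Fin K), ⨅ μ : stdSimplex ℝ X, F p.1 μ.1 :=
          le_ciSup hb ⟨pstar, hpstarS⟩
  -- compute the supremum at mustar
  have hsupstar : (⨆ p : stdSimplex ℝ (Fin K), F p.1 mustar) = v := by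
    refine le_antisymm (ciSup_le fun p => hkey p.1 p.2) ?_
    calc v = F pstar mustar := hFv.symm
      _ ≤ ⨆ p : stdSimplex ℝ (Fin K), F p.1 mustar :=
          le_ciSup (hbddAbove mustar hmustarS) ⟨pstar, hpstarS⟩
  have hsuple : ∀ μ : stdSimplex ℝ X, v ≤ ⨆ p : stdSimplex ℝ (Fin K), F p.1 μ.1 := by
    intro μ
    calc v ≤ F pstar μ.1 := hkey2 μ.1 μ.2
      _ ≤ ⨆ p : stdSimplex ℝ (Fin K), F p.1 μ.1 :=
          le_ciSup (hbddAbove μ.1 μ.2) ⟨pstar, hpstarS⟩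
  have hinfsup : (⨅ μ : stdSimplex ℝ X, ⨆ p : stdSimplex ℝ (Fin K), F p.1 μ.1) = v := by
    refine le_antisymm ?_ (le_ciInf hsuple)
    have hb : BddBelow (Set.range fun μ : stdSimplex ℝ X =>
        ⨆ p : stdSimplex ℝ (Fin K), F p.1 μ.1) := by
      refine ⟨v, ?_⟩; rintro r ⟨μ, rfl⟩; exact hsuple μ
    calc (⨅ μ : stdSimplex ℝ X, ⨆ p : stdSimplex ℝ (Fin K), F p.1 μ.1)
        ≤ ⨆ p : stdSimplex ℝ (Fin K), F p.1 mustar := ciInf_le hb ⟨mustar, hmustarS⟩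
      _ = v := hsupstar
  refine ⟨pstar, hpstarS, mustar, hmustarS, ?_, ?_, ?_, ?_, ?_⟩
  · intro p hp; rw [hFv]; exact hkey p hp
  · intro μ hμ; rw [hFv]; exact hkey2 μ hμ
  · rw [hsupinf, hinfsup]
  · rw [hsupinf, hinfstar]
  · rw [hsupstar, hinfsup]
end

section
/- Let X be a finite nonempty index set and for each x ∈ X let D_x : ℝ^K_{≥0} → ℝ be continuous, concave, and positively homogeneous of degree one (D_x(λp) = λ D_x(p) for all λ > 0 and p in the nonnegative orthant). Define F(p,μ) = Σ_{x∈X} μ_x D_x(p). Let p* ∈ Δ_K, μ* ∈ Δ_X, and suppose each D_x is (Fréchet) differentiable at p* with gradient ∇D_x(p*); set g = Σ_x μ*_x ∇D_x(p*) and v = F(p*,μ*). Then (p*,μ*) is a saddle point of F on Δ_K × Δ_X (i.e., F(p,μ*) ≤ v ≤ F(p*,μ) for all p ∈ Δ_K, μ ∈ Δ_X) if and only if the KKT complementary-slackness conditions hold: D_x(p*) ≥ v for all x ∈ X with μ*_x (D_x(p*) − v) = 0 for all x, and g_i ≤ v for all i ∈ {1,…,K} with p*_i (v − g_i) = 0 for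 all i. -/
open Filter Topology

lemma aux_deriv_le {f : ℝ → ℝ} {f' c : ℝ} (hf : HasDerivAt f f' 0)
    (h : ∀ t : ℝ, 0 < t → t ≤ 1 → f t - f 0 ≤ t * c) : f' ≤ c := by
  have hs : Tendsto (slope f 0) (𝓝[>] 0) (𝓝 f') :=
    (hasDerivAt_iff_tendsto_slope.mp hf).mono_left
      (nhdsWithin_mono 0 fun x hx => ne_of_gt hx)
  refine le_of_tendsto hs ?_
  filter_upwards [Ioc_mem_nhdsGT_of_mem (Set.left_mem_Ico.mpr one_pos)] with t ht
  have h1 := h t ht.1 ht.2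
  rw [slope_def_field, sub_zero, div_le_iff₀ ht.1]
  linarith [h1]

lemma aux_deriv_ge {f : ℝ → ℝ} {f' c : ℝ} (hf : HasDerivAt f f' 0)
    (h : ∀ t : ℝ, 0 < t → t ≤ 1 → t * c ≤ f t - f 0) : c ≤ f' := by
  have := aux_deriv_le hf.neg (c := -c) (fun t ht0 ht1 => by
    have := h t ht0 ht1; simp only [Pi.neg_apply]; nlinarith)
  linarith

lemma aux_seg {K : ℕ} {f : (Fin K → ℝ) → ℝ} {L : (Fin K → ℝ) →L[ℝ] ℝ}
    {a : Fin K → ℝ} (hf : HasFDerivAt f L a) (d : Fin K → ℝ) :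
    HasDerivAt (fun t : ℝ => f (a + t • d)) (L d) 0 := by
  have hc : HasDerivAt (fun t : ℝ => a + t • d) d 0 := by
    simpa using ((hasDerivAt_id (0:ℝ)).smul_const d).const_add a
  have hf' : HasFDerivAt f L (a + (0:ℝ) • d) := by simpa using hf
  exact hf'.comp_hasDerivAt 0 hc

lemma aux_euler {K : ℕ} {f : (Fin K → ℝ) → ℝ} {L : (Fin K → ℝ) →L[ℝ] ℝ}
    {p : Fin K → ℝ}
    (hf : HasFDerivAt f L p)
    (hhom : ∀ c : ℝ, 0 < c → f (c • p) = c * f p) : L p = f p := by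
  have hc : HasDerivAt (fun c : ℝ => c • p) p 1 := by
    simpa using (hasDerivAt_id (1:ℝ)).smul_const p
  have h1 : HasDerivAt (fun c : ℝ => f (c • p)) (L p) 1 := by
    have hf' : HasFDerivAt f L ((1:ℝ) • p) := by simpa using hf
    exact hf'.comp_hasDerivAt 1 hc
  have h2 : (fun c : ℝ => c * f p) =ᶠ[𝓝 (1:ℝ)] (fun c : ℝ => f (c • p)) := by
    filter_upwards [Ioi_mem_nhds (zero_lt_one)] with c hc using (hhom c hc).symm
  have h3 : HasDerivAt (fun c : ℝ => c * f p) (L p) 1 := h1.congr_of_eventuallyEq h2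
  have h4 : HasDerivAt (fun c : ℝ => c * f p) (f p) 1 := by
    simpa using (hasDerivAt_id (1:ℝ)).mul_const (f p)
  exact h3.unique h4

lemma aux_grad_ineq {K : ℕ} {f : (Fin K → ℝ) → ℝ} {L : (Fin K → ℝ) →L[ℝ] ℝ}
    {a p : Fin K → ℝ}
    (hconc : ConcaveOn ℝ {q : Fin K → ℝ | ∀ i, 0 ≤ q i} f)
    (ha : ∀ i, 0 ≤ a i) (hp : ∀ i, 0 ≤ p i)
    (hf : HasFDerivAt f L a) :
    f p ≤ f a + L (p - a) := by
  have key : f p - f a ≤ L (p - a) := by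
    refine aux_deriv_ge (aux_seg hf (p - a)) (fun t ht0 ht1 => ?_)
    have heq : a + t • (p - a) = (1 - t) • a + t • p := by
      ext i; simp [Pi.smul_apply]; ring
    have hco : (1 - t) • f a + t • f p ≤ f ((1 - t) • a + t • p) :=
      hconc.2 ha hp (by linarith) ht0.le (by ring)
    rw [← heq] at hco
    simp only [smul_eq_mul] at hco
    simp only [zero_smul, add_zero]
    nlinarith
  linarith


/-- For continuous, concave, positively one-homogeneous `D x` on the
nonnegative orthant, differentiable at `p*` with gradients `gradD x`, the pair
`(p*, μ*)` is a saddle point of `F(p,μ) = ∑ x, μ x * D x p` on `Δ_K × Δ_X` if and only if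
the KKT complementary-slackness conditions hold, where `g = ∑ x, μ* x • ∇D x (p*)` and
`v = F(p*, μ*)`. -/
theorem stmt_1 {K : ℕ} {X : Type*} [Fintype X] [Nonempty X]
    (D : X → (Fin K → ℝ) → ℝ)
    (hcont : ∀ x, ContinuousOn (D x) {p : Fin K → ℝ | ∀ i, 0 ≤ p i})
    (hconc : ∀ x, ConcaveOn ℝ {p : Fin K → ℝ | ∀ i, 0 ≤ p i} (D x))
    (hhom : ∀ x, ∀ c : ℝ, 0 < c → ∀ p : Fin K → ℝ, (∀ i, 0 ≤ p i) →
      D x (c • p) = c * D x p)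
    (pstar : Fin K → ℝ) (hp : pstar ∈ stdSimplex ℝ (Fin K))
    (mustar : X → ℝ) (hmu : mustar ∈ stdSimplex ℝ X)
    (gradD : X → Fin K → ℝ)
    (hgrad : ∀ x, ∃ L : (Fin K → ℝ) →L[ℝ] ℝ, HasFDerivAt (D x) L pstar ∧
      ∀ w, L w = ∑ i, gradD x i * w i)
    (g : Fin K → ℝ) (hg : g = fun i => ∑ x, mustar x * gradD x i)
    (v : ℝ) (hv : v = ∑ x, mustar x * D x pstar) :
    ((∀ p ∈ stdSimplex ℝ (Fin K), ∑ x, mustar x * D x p ≤ v) ∧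
      (∀ μ ∈ stdSimplex ℝ X, v ≤ ∑ x, μ x * D x pstar))
    ↔
    ((∀ x, v ≤ D x pstar) ∧ (∀ x, mustar x * (D x pstar - v) = 0) ∧
      (∀ i, g i ≤ v) ∧ (∀ i, pstar i * (v - g i) = 0)) := by
  classical
  choose L hL1 hL2 using hgrad
  have hp0 : ∀ i, 0 ≤ pstar i := hp.1
  have hp1 : ∑ i, pstar i = 1 := hp.2
  have hmu0 : ∀ x, 0 ≤ mustar x := hmu.1
  have hmu1 : ∑ x, mustar x = 1 := hmu.2
  -- Euler identity
  have euler : ∀ x, ∑ i, gradD x i * pstar i = D x pstar := by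
    intro x
    have := aux_euler (hL1 x) (fun c hc => hhom x c hc pstar hp0)
    rw [← this, hL2]
  have hgp : ∑ i, pstar i * g i = v := by
    have h1 : ∑ i, pstar i * g i = ∑ x, mustar x * ∑ i, gradD x i * pstar i := by
      subst hg
      simp_rw [Finset.mul_sum]
      rw [Finset.sum_comm]
      exact Finset.sum_congr rfl fun x _ => Finset.sum_congr rfl fun i _ => by ring
    rw [h1, hv]
    exact Finset.sum_congr rfl fun x _ => by rw [euler x]
  constructor
  · rintro ⟨h1, h2⟩
    -- (a) v ≤ D x pstar
    have ha : ∀ x, v ≤ D x pstar := by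
      intro x
      have hmem : (fun y => if y = x then (1:ℝ) else 0) ∈ stdSimplex ℝ X := by
        constructor
        · intro y; dsimp only; split_ifs <;> norm_num
        · simp
      have := h2 _ hmem
      simpa using this
    -- (b) complementary slackness in μ
    have hsum0 : ∑ x, mustar x * (D x pstar - v) = 0 := by
      simp_rw [mul_sub]
      rw [Finset.sum_sub_distrib, ← Finset.sum_mul, hmu1, one_mul, hv, sub_self]
    have hb : ∀ x, mustar x * (D x pstar - v) = 0 := by
      intro x
      exact (Finset.sum_eq_zero_iff_of_nonneg
        (fun y _ => mul_nonneg (hmu0 y) (sub_nonneg.mpr (ha y)))).mp hsum0 x (Finset.mem_univ x)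
    -- (c) g i ≤ v  via directional derivatives
    have hc : ∀ i, g i ≤ v := by
      intro i
      set LF : (Fin K → ℝ) →L[ℝ] ℝ := ∑ x, mustar x • L x with hLF
      have hF : HasFDerivAt (fun p => ∑ x, mustar x * D x p) LF pstar := by
        rw [hLF]
        exact HasFDerivAt.fun_sum fun x _ => (hL1 x).const_mul (mustar x)
      have hLFw : ∀ w, LF w = ∑ j, g j * w j := by
        intro w
        rw [hLF]
        simp only [ContinuousLinearMap.sum_apply, ContinuousLinearMap.smul_apply, smul_eq_mul]
        subst hg
        simp_rw [hL2, Finset.mul_sum, Finset.sum_mul]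
        rw [Finset.sum_comm]
        exact Finset.sum_congr rfl fun j _ => Finset.sum_congr rfl fun x _ => by ring
      set d : Fin K → ℝ := (fun j => if j = i then (1:ℝ) else 0) - pstar with hd
      have hder := aux_seg hF d
      have hLFd : LF d = g i - v := by
        rw [hLFw]
        have : ∀ j, d j = (if j = i then (1:ℝ) else 0) - pstar j := fun j => rfl
        simp_rw [this, mul_sub]
        rw [Finset.sum_sub_distrib]
        have h3 : ∑ j, g j * (if j = i then (1:ℝ) else 0) = g i := by simp
        have h4 : ∑ j, g j * pstar j = v := by
          rw [← hgp]; exact Finset.sum_congr rfl fun j _ => by ring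
        rw [h3, h4]
      have hkey : LF d ≤ 0 := by
        refine aux_deriv_le hder (fun t ht0 ht1 => ?_)
        have hmem : pstar + t • d ∈ stdSimplex ℝ (Fin K) := by
          constructor
          · intro j
            have hval : (pstar + t • d) j
                = (1 - t) * pstar j + t * (if j = i then (1:ℝ) else 0) := by
              simp only [hd, Pi.add_apply, Pi.smul_apply, Pi.sub_apply, smul_eq_mul]
              split_ifs <;> ring
            rw [hval]
            have : (0:ℝ) ≤ (if j = i then (1:ℝ) else 0) := by split_ifs <;> norm_num
            have := hp0 j
            nlinarith
          · have hsd : ∑ j, d j = 0 := by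
              simp [hd, Finset.sum_sub_distrib, hp1]
            have : ∑ j, (pstar + t • d) j = ∑ j, pstar j + t * ∑ j, d j := by
              simp [Finset.sum_add_distrib, Finset.mul_sum]
            rw [this, hp1, hsd]; ring
        have hle := h1 _ hmem
        have h0 : (fun t : ℝ => ∑ x, mustar x * D x (pstar + t • d)) 0
            = ∑ x, mustar x * D x pstar := by simp
        simp only [h0]
        rw [← hv]
        calc (∑ x, mustar x * D x (pstar + t • d)) - v ≤ v - v := by linarith
          _ = t * 0 := by ring
      rw [hLFd] at hkey
      linarith
    -- (d) complementary slackness in p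
    have hsum0' : ∑ i, pstar i * (v - g i) = 0 := by
      simp_rw [mul_sub]
      rw [Finset.sum_sub_distrib, ← Finset.sum_mul, hp1, one_mul, hgp, sub_self]
    have hd : ∀ i, pstar i * (v - g i) = 0 := by
      intro i
      exact (Finset.sum_eq_zero_iff_of_nonneg
        (fun j _ => mul_nonneg (hp0 j) (sub_nonneg.mpr (hc j)))).mp hsum0' i (Finset.mem_univ i)
    exact ⟨ha, hb, hc, hd⟩
  · rintro ⟨k1, k2, k3, k4⟩
    constructor
    · intro p hpm
      have hgi : ∀ x, D x p ≤ D x pstar + ∑ i, gradD x i * (p i - pstar i) := by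
        intro x
        have := aux_grad_ineq (hconc x) hp0 hpm.1 (hL1 x)
        rwa [hL2 x] at this
      calc ∑ x, mustar x * D x p
          ≤ ∑ x, mustar x * (D x pstar + ∑ i, gradD x i * (p i - pstar i)) :=
            Finset.sum_le_sum fun x _ => mul_le_mul_of_nonneg_left (hgi x) (hmu0 x)
        _ = v + ∑ i, g i * (p i - pstar i) := by
            simp_rw [mul_add]
            rw [Finset.sum_add_distrib, ← hv]
            congr 1
            subst hg
            simp_rw [Finset.mul_sum, Finset.sum_mul]
            rw [Finset.sum_comm]
            exact Finset.sum_congr rfl fun i _ => Finset.sum_congr rfl fun x _ => by ring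
        _ = ∑ i, g i * p i := by
            simp_rw [mul_sub]
            rw [Finset.sum_sub_distrib]
            have : ∑ i, g i * pstar i = v := by
              rw [← hgp]; exact Finset.sum_congr rfl fun j _ => by ring
            rw [this]; ring
        _ ≤ ∑ i, v * p i :=
            Finset.sum_le_sum fun i _ => mul_le_mul_of_nonneg_right (k3 i) (hpm.1 i)
        _ = v := by rw [← Finset.mul_sum, hpm.2, mul_one]
    · intro μ hμ
      calc v = ∑ x, μ x * v := by rw [← Finset.sum_mul, hμ.2, one_mul]
        _ ≤ ∑ x, μ x * D x pstar :=
            Finset.sum_le_sum fun x _ => mul_le_mul_of_nonneg_left (k1 x) (hμ.1 x)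
end

section
/- Let X be a finite nonempty index set and U ⊆ ℝ^K × ℝ^X an open set on which F is twice continuously differentiable; suppose F(·,μ) is concave on Δ_K for every μ ∈ Δ_X and F(p,·) is convex on Δ_X for every p ∈ Δ_K. Let (p(·),μ(·)) : [0,∞) → Δ_K × Δ_X be absolutely continuous with (p(t),μ(t)) ∈ U for all t, and suppose for almost every t ≥ 0: ṗ(t) = q(t) − p(t) where q(t) ∈ Δ_K satisfies q(t)ᵀ∇_p F(p(t),μ(t)) = max_{q'∈Δ_K} q'ᵀ∇_p F(p(t),μ(t)), and μ̇(t) = ν(t) − μ(t) where ν(t) ∈ Δ_X satisfies ν(t)ᵀ∇_μ F(p(t),μ(t)) = min_{ν'∈Δ_X} ν'ᵀ∇_μ F(p(t),μ(t)). Define V(p,μ) = max_{q'∈Δ_K}(q'−p)ᵀ∇_p F(p,μ) − min_{ν'∈Δ_X}(ν'−μ)ᵀ∇_μ F(p,μ). Then V(p(t),μ(t)) ≤ V(p(0),μ(0)) e^{−t} for all t ≥ 0. -/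
open MeasureTheory Set Filter Metric intervalIntegral Topology

section Helpers

lemma aux_ae_hasDerivAt {E : Type*} [NormedAddCommGroup E] [NormedSpace ℝ E] [CompleteSpace E]
    (f : ℝ → E) (hf : LocallyIntegrable f volume) :
    ∀ᵐ s, HasDerivAt (fun t => ∫ u in (0:ℝ)..t, f u) (f s) s := by
  have hint : ∀ a b : ℝ, IntervalIntegrable f volume a b := fun a b => by
    rw [intervalIntegrable_iff]
    exact (hf.integrableOn_isCompact isCompact_uIcc).mono_set Set.uIoc_subset_uIcc
  filter_upwards [IsUnifLocDoublingMeasure.ae_tendsto_average_norm_sub volume hf 1] with s hs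
  rw [hasDerivAt_iff_tendsto]
  have havg : Tendsto (fun x' : ℝ => ⨍ y in closedBall ((s + x')/2) (|x' - s|/2), ‖f y - f s‖)
      (𝓝[≠] s) (𝓝 0) := by
    apply hs (fun x' => (s + x')/2) (fun x' => |x' - s|/2)
    · rw [tendsto_nhdsWithin_iff]
      constructor
      · have : Tendsto (fun x' : ℝ => |x' - s|/2) (𝓝 s) (𝓝 (|s - s|/2)) := by
          exact ((continuous_abs.comp (continuous_id.sub continuous_const)).div_const 2).tendsto s
        simpa using this.mono_left nhdsWithin_le_nhds
      · filter_upwards [self_mem_nhdsWithin] with x' (hx' : x' ≠ s)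
        simpa [abs_pos, sub_eq_zero] using hx'
    · filter_upwards with x'
      rw [mem_closedBall, one_mul, Real.dist_eq]
      rw [show s - (s + x')/2 = (s - x')/2 by ring, abs_div, abs_sub_comm]
      simp
  have key : ∀ x' : ℝ, x' ≠ s →
      ‖x' - s‖⁻¹ * ‖(∫ u in (0:ℝ)..x', f u) - (∫ u in (0:ℝ)..s, f u) - (x' - s) • f s‖
        ≤ ⨍ y in closedBall ((s + x')/2) (|x' - s|/2), ‖f y - f s‖ := by
    intro x' hx'
    have h1 : (∫ u in (0:ℝ)..x', f u) - (∫ u in (0:ℝ)..s, f u) = ∫ u in s..x', f u := by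
      rw [← intervalIntegral.integral_add_adjacent_intervals (hint 0 s) (hint s x')]
      abel
    have h2 : (x' - s) • f s = ∫ _u in s..x', f s := by rw [intervalIntegral.integral_const]
    rw [h1, h2, ← intervalIntegral.integral_sub (hint s x') intervalIntegrable_const]
    have hsub : Set.uIoc s x' ⊆ closedBall ((s + x')/2) (|x' - s|/2) := by
      rw [Real.closedBall_eq_Icc]
      intro y hy
      rw [Set.mem_Icc]
      rcases le_total s x' with h | h
      · rw [uIoc_of_le h] at hy
        constructor
        · calc (s + x')/2 - |x' - s|/2 = s := by rw [abs_of_nonneg (by linarith)]; ring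
          _ ≤ y := le_of_lt hy.1
        · calc y ≤ x' := hy.2
          _ = (s + x')/2 + |x' - s|/2 := by rw [abs_of_nonneg (by linarith)]; ring
      · rw [uIoc_of_ge h] at hy  -- check name
        constructor
        · calc (s + x')/2 - |x' - s|/2 = x' := by rw [abs_of_nonpos (by linarith)]; ring
          _ ≤ y := le_of_lt hy.1
        · calc y ≤ s := hy.2
          _ = (s + x')/2 + |x' - s|/2 := by rw [abs_of_nonpos (by linarith)]; ring
    have hib : IntegrableOn (fun y => ‖f y - f s‖) (closedBall ((s + x')/2) (|x' - s|/2)) := by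
      exact ((hf.sub (locallyIntegrable_const (f s))).integrableOn_isCompact
        (isCompact_closedBall _ _)).norm
    have hle : ‖∫ u in s..x', (f u - f s)‖ ≤ ∫ y in closedBall ((s + x')/2) (|x' - s|/2), ‖f y - f s‖ := by
      refine le_trans (intervalIntegral.norm_integral_le_integral_norm_uIoc) ?_
      exact setIntegral_mono_set hib (Eventually.of_forall fun y => norm_nonneg _)
        (HasSubset.Subset.eventuallyLE hsub)
    rw [setAverage_eq]
    rw [measureReal_def, Real.volume_closedBall, smul_eq_mul]
    rw [ENNReal.toReal_ofReal (by positivity)]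
    have h4 : (2 * (|x' - s|/2)) = ‖x' - s‖ := by rw [Real.norm_eq_abs]; ring
    rw [h4]
    have : (0:ℝ) < ‖x' - s‖ := by simpa [norm_pos_iff, sub_eq_zero] using hx'
    exact mul_le_mul_of_nonneg_left hle (by positivity)
  rw [← nhdsNE_sup_pure, tendsto_sup]
  constructor
  · apply tendsto_of_tendsto_of_tendsto_of_le_of_le' (tendsto_const_nhds) havg
    · filter_upwards with x'; positivity
    · filter_upwards [self_mem_nhdsWithin] with x' (hx' : x' ≠ s) using key x' hx'
  · have h0 : (fun x' : ℝ => ‖x' - s‖⁻¹ *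
        ‖((∫ u in (0:ℝ)..x', f u) - ∫ u in (0:ℝ)..s, f u) - (x' - s) • f s‖) s = 0 := by
      simp
    have := tendsto_pure_nhds (fun x' : ℝ => ‖x' - s‖⁻¹ *
        ‖((∫ u in (0:ℝ)..x', f u) - ∫ u in (0:ℝ)..s, f u) - (x' - s) • f s‖) s
    simpa using this

lemma aux_slope_seq {φ : ℝ → ℝ} {d c : ℝ} (hφ : HasDerivAt φ d c) :
    Tendsto (fun n : ℕ => (φ (c + 1/(n+1)) - φ c) * (n+1)) atTop (𝓝 d) := by
  have hseq : Tendsto (fun n : ℕ => c + 1/(n+1)) atTop (𝓝[≠] c) := by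
    rw [tendsto_nhdsWithin_iff]
    constructor
    · have := tendsto_one_div_add_atTop_nhds_zero_nat (𝕜 := ℝ)
      have h2 := this.const_add c
      simpa using h2
    · filter_upwards with n
      have : (0:ℝ) < 1/(n+1) := by positivity
      simp only [mem_compl_iff, mem_singleton_iff]
      intro h
      nlinarith [h]
  have := ((hasDerivAt_iff_tendsto_slope.1 hφ).comp hseq)
  have heq : ∀ n : ℕ, (slope φ c ∘ fun n : ℕ => c + 1/(n+1)) n = (φ (c + 1/(n+1)) - φ c) * (n+1) := by
    intro n
    have hne : (n:ℝ)+1 ≠ 0 := by positivity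
    simp only [Function.comp_apply, slope_def_field, add_sub_cancel_left]
    rw [div_eq_mul_inv, one_div, inv_inv]
  exact Tendsto.congr heq this

lemma aux_lip_mono {f : ℝ → ℝ} {C : NNReal} (hf : LipschitzWith C f) {a b : ℝ} (hab : a ≤ b)
    (hd : ∀ᵐ s, s ∈ Set.Ioo a b → DifferentiableAt ℝ f s → deriv f s ≤ 0) : f b ≤ f a := by
  have hcont : Continuous f := hf.continuous
  have hint : ∀ u v : ℝ, IntervalIntegrable f volume u v := fun u v => hcont.intervalIntegrable u v
  set h : ℕ → ℝ := fun n => 1/(n+1) with hh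
  have hhpos : ∀ n, 0 < h n := fun n => by positivity
  set g : ℕ → ℝ → ℝ := fun n x => (f (x + h n) - f x) * (n+1) with hg
  -- integral identity
  have I1 : ∀ n : ℕ, (∫ x in a..b, g n x) =
      ((∫ x in b..(b + h n), f x) - ∫ x in a..(a + h n), f x) * (n+1) := by
    intro n
    have e1 : (∫ x in a..b, (f (x + h n) - f x)) =
        (∫ x in b..(b + h n), f x) - ∫ x in a..(a + h n), f x := by
      rw [intervalIntegral.integral_sub (show IntervalIntegrable (fun x => f (x + h n)) volume a b from
        (hcont.comp (continuous_id.add continuous_const)).intervalIntegrable a b) (hint a b)]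
      have e2 : (∫ x in a..b, f (x + h n)) = ∫ x in (a + h n)..(b + h n), f x :=
        intervalIntegral.integral_comp_add_right f (h n)
      rw [e2]
      have e3 : (∫ x in (a + h n)..(b + h n), f x) =
          (∫ x in (a+h n)..b, f x) + ∫ x in b..(b + h n), f x :=
        (intervalIntegral.integral_add_adjacent_intervals (hint _ _) (hint _ _)).symm
      have e4 : (∫ x in a..b, f x) = (∫ x in a..(a + h n), f x) + ∫ x in (a + h n)..b, f x :=
        (intervalIntegral.integral_add_adjacent_intervals (hint _ _) (hint _ _)).symm
      rw [e3, e4]; ring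
    calc (∫ x in a..b, g n x) = ∫ x in a..b, ((f (x + h n) - f x) * (n+1)) := rfl
      _ = (∫ x in a..b, (f (x + h n) - f x)) * (n+1) := by
          rw [intervalIntegral.integral_mul_const]
      _ = _ := by rw [e1]
  -- limit of boundary terms
  have bdry : ∀ c : ℝ, Tendsto (fun n : ℕ => (∫ x in c..(c + h n), f x) * (n+1)) atTop (𝓝 (f c)) := by
    intro c
    have hder : HasDerivAt (fun t => ∫ x in c..t, f x) (f c) c := by
      apply intervalIntegral.integral_hasDerivAt_right (hint c c)
      · exact ⟨univ, univ_mem, (hcont.stronglyMeasurable.aestronglyMeasurable)⟩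
      · exact hcont.continuousAt
    have := aux_slope_seq hder
    simpa [hh, one_div] using this
  have limit1 : Tendsto (fun n : ℕ => ∫ x in a..b, g n x) atTop (𝓝 (f b - f a)) := by
    have := (bdry b).sub (bdry a)
    apply Tendsto.congr _ this
    intro n
    rw [I1 n]; ring
  -- DCT
  have hIoo : ∀ᵐ x ∂(volume.restrict (Ioc a b)), x ∈ Ioo a b := by
    have : (Ioc a b : Set ℝ) =ᵐ[volume] Ioo a b := Ioo_ae_eq_Ioc.symm
    rw [ae_restrict_congr_set this]
    exact ae_restrict_mem measurableSet_Ioo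
  have hdiff : ∀ᵐ x ∂(volume.restrict (Ioc a b)), DifferentiableAt ℝ f x :=
    ae_restrict_of_ae (hf.ae_differentiableAt_of_real)
  have hd' : ∀ᵐ x ∂(volume.restrict (Ioc a b)), x ∈ Ioo a b → DifferentiableAt ℝ f x → deriv f x ≤ 0 :=
    ae_restrict_of_ae hd
  have limit2 : Tendsto (fun n : ℕ => ∫ x in Ioc a b, g n x) atTop (𝓝 (∫ x in Ioc a b, deriv f x)) := by
    apply tendsto_integral_of_dominated_convergence (fun _ => (C:ℝ))
    · intro n
      exact ((hcont.comp (continuous_id.add continuous_const)).sub hcont).mul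
        continuous_const |>.aestronglyMeasurable
    · exact integrable_const _
    · intro n
      filter_upwards with x
      have := hf.dist_le_mul (x + h n) x
      rw [Real.dist_eq, Real.dist_eq] at this
      have h1 : |f (x + h n) - f x| ≤ C * h n := by
        simpa [abs_of_pos (hhpos n)] using this
      have h2 : ‖g n x‖ = |f (x + h n) - f x| * (n+1) := by
        rw [hg, Real.norm_eq_abs, abs_mul, abs_of_nonneg (show (0:ℝ) ≤ (n:ℝ)+1 by positivity)]
      rw [h2]
      calc |f (x + h n) - f x| * (n+1) ≤ (C * h n) * (n+1) := by
            apply mul_le_mul_of_nonneg_right h1 (by positivity)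
        _ = C * (h n * (n+1)) := by ring
        _ = C := by
            rw [hh]; field_simp
    · filter_upwards [hdiff] with x hx
      have := aux_slope_seq (hx.hasDerivAt)
      exact this
  have le0 : (∫ x in Ioc a b, deriv f x) ≤ 0 := by
    apply integral_nonpos_of_ae
    filter_upwards [hIoo, hdiff, hd'] with x h1 h2 h3
    exact h3 h1 h2
  have ieq : ∀ n : ℕ, (∫ x in a..b, g n x) = ∫ x in Ioc a b, g n x := fun n =>
    intervalIntegral.integral_of_le hab
  have : Tendsto (fun n : ℕ => ∫ x in Ioc a b, g n x) atTop (𝓝 (f b - f a)) := by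
    apply Tendsto.congr (fun n => ieq n) limit1
  have huniq : f b - f a = ∫ x in Ioc a b, deriv f x := tendsto_nhds_unique this limit2
  linarith [le0, huniq.le, huniq.ge]

lemma aux_concave_snd_le {φ φd : ℝ → ℝ} {c : ℝ} {ε : ℝ} (hε : 0 < ε)
    (hder : ∀ u ∈ Set.Ioo (-ε) ε, HasDerivAt φ (φd u) u)
    (h2 : HasDerivAt φd c 0)
    (hmid : ∀ u ∈ Set.Ioc (0:ℝ) (1/2), φ 0 + φ (2*u) ≤ 2 * φ u) : c ≤ 0 := by
  have key : ∀ η > (0:ℝ), c ≤ 8 * η := by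
    intro η hη
    have hlo := (hasDerivAt_iff_isLittleO.1 h2).def hη
    rw [Metric.eventually_nhds_iff] at hlo
    obtain ⟨δ, hδ, hball⟩ := hlo
    set ε' : ℝ := min ε δ with hε'
    have hε'pos : 0 < ε' := lt_min hε hδ
    set u : ℝ := min ε' 1 / 4 with hu
    have hupos : 0 < u := by positivity
    have hu2 : 2 * u < ε' := by
      have h1 : min ε' 1 ≤ ε' := min_le_left _ _
      have : 0 < min ε' 1 := lt_min hε'pos one_pos
      nlinarith
    have hu12 : u ≤ 1/2 := by
      have : min ε' 1 ≤ 1 := min_le_right _ _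
      rw [hu]; linarith
    -- remainder function
    set R : ℝ → ℝ := fun x => φ x - φ 0 - φd 0 * x - c * x^2/2 with hR
    have hRder : ∀ x ∈ Icc (0:ℝ) (2*u), HasDerivAt R (φd x - φd 0 - c * x) x := by
      intro x hx
      have hxIoo : x ∈ Set.Ioo (-ε) ε := by
        constructor
        · have := hx.1; linarith
        · have h1 : x ≤ 2*u := hx.2
          have : ε' ≤ ε := min_le_left _ _
          linarith
      have h1 : HasDerivAt φ (φd x) x := hder x hxIoo
      have hb : HasDerivAt (fun x : ℝ => φ 0 + φd 0 * x + c * x^2/2) (φd 0 + c * x) x := by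
        have hb0 : HasDerivAt (fun x : ℝ => φ 0 + φd 0 * x + c * x^2/2)
            (0 + φd 0 * 1 + c * (↑2 * x^(2-1))/2) x :=
          ((hasDerivAt_const x (φ 0)).add ((hasDerivAt_id x).const_mul (φd 0))).add
            (((hasDerivAt_pow 2 x).const_mul c).div_const 2)
        convert hb0 using 1
        push_cast
        ring
      have hRalt : R = fun x => φ x - (φ 0 + φd 0 * x + c * x^2/2) := by
        funext y; rw [hR]; ring
      rw [hRalt]
      have := h1.sub hb
      exact this.congr_deriv (by ring)
    have hRbound : ∀ r ∈ Icc (0:ℝ) (2*u), |R r| ≤ η * (2*u) * r := by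
      intro r hr
      have hsub : ∀ x ∈ Icc (0:ℝ) r, HasDerivWithinAt R (φd x - φd 0 - c * x) (Icc 0 r) x :=
        fun x hx => (hRder x ⟨hx.1, le_trans hx.2 hr.2⟩).hasDerivWithinAt
      have hbd : ∀ x ∈ Icc (0:ℝ) r, ‖φd x - φd 0 - c * x‖ ≤ η * (2*u) := by
        intro x hx
        have hxd : dist x 0 < δ := by
          rw [Real.dist_eq, sub_zero]
          rw [abs_of_nonneg hx.1]
          calc x ≤ r := hx.2
            _ ≤ 2*u := hr.2
            _ < ε' := hu2
            _ ≤ δ := min_le_right _ _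
        have := hball hxd
        simp only [sub_zero, Real.norm_eq_abs, smul_eq_mul] at this
        have h3 : |φd x - φd 0 - c * x| ≤ η * |x| := by
          calc |φd x - φd 0 - c * x| = |φd x - φd 0 - x * c| := by ring_nf
            _ ≤ η * |x| := this
        calc ‖φd x - φd 0 - c * x‖ = |φd x - φd 0 - c * x| := rfl
          _ ≤ η * |x| := h3
          _ ≤ η * (2*u) := by
              apply mul_le_mul_of_nonneg_left _ (le_of_lt hη)
              rw [abs_of_nonneg hx.1]; exact le_trans hx.2 hr.2
      have := norm_image_sub_le_of_norm_deriv_le_segment' hsub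
        (fun x hx => hbd x (Set.Ico_subset_Icc_self hx)) r (right_mem_Icc.2 hr.1)
      have hR0 : R 0 = 0 := by rw [hR]; simp
      rw [hR0, sub_zero] at this
      simpa using this
    -- second difference
    have hmidu := hmid u ⟨hupos, hu12⟩
    have hphi : ∀ x, φ x = φ 0 + φd 0 * x + c * x^2/2 + R x := by
      intro x; rw [hR]; ring
    have hRu := hRbound u ⟨le_of_lt hupos, by linarith⟩
    have hR2u := hRbound (2*u) ⟨by linarith, le_refl _⟩
    have hkey : c * u^2 + (R (2*u) - 2 * R u) ≤ 0 := by
      have e1 := hphi (2*u)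
      have e2 := hphi u
      have e3 : c * u^2 + (R (2*u) - 2 * R u) = φ 0 + φ (2*u) - 2 * φ u := by
        linear_combination e1 - 2 * e2
      linarith [hmidu, e3.le, e3.ge]
    have : c * u^2 ≤ 8 * η * u^2 := by
      have h1 : |R (2*u)| ≤ 4 * η * u^2 := by
        calc |R (2*u)| ≤ η * (2*u) * (2*u) := hR2u
          _ = 4 * η * u^2 := by ring
      have h2' : |R u| ≤ 2 * η * u^2 := by
        calc |R u| ≤ η * (2*u) * u := hRu
          _ = 2 * η * u^2 := by ring
      have a1 := abs_le.1 h1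
      have a2 := abs_le.1 h2'
      linarith [hkey, a1.1, a1.2, a2.1, a2.2]
    nlinarith [this, pow_pos hupos 2]
  by_contra hc
  push_neg at hc
  have := key (c/16) (by linarith)
  linarith

lemma aux_chain {E : Type*} [PseudoMetricSpace E] (f : ℝ → E) {C δ a b : ℝ} (hδ : 0 < δ)
    (hC : 0 ≤ C)
    (H : ∀ u v, a ≤ u → u ≤ v → v ≤ b → v - u ≤ δ → dist (f u) (f v) ≤ C * (v - u)) :
    ∀ u v, a ≤ u → u ≤ v → v ≤ b → dist (f u) (f v) ≤ C * (v - u) := by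
  intro u v hau huv hvb
  rcases eq_or_lt_of_le huv with h | h
  · subst h; simp
  set d : ℝ := v - u with hd
  have hdpos : 0 < d := by rw [hd]; linarith
  set n : ℕ := ⌈d/δ⌉₊ with hn
  have hn1 : 1 ≤ n := by
    rw [hn, Nat.one_le_ceil_iff]
    positivity
  have hnpos : (0:ℝ) < n := by exact_mod_cast Nat.lt_of_lt_of_le Nat.zero_lt_one hn1
  have hstep : d / n ≤ δ := by
    have := Nat.le_ceil (d/δ)
    rw [div_le_iff₀ hnpos]
    rw [div_le_iff₀ hδ] at this
    calc d ≤ (⌈d/δ⌉₊ : ℝ) * δ := by linarith [this]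
      _ = (n:ℝ) * δ := by rw [hn]
      _ = δ * n := by ring
  have hkey := dist_le_range_sum_dist (fun k : ℕ => f (u + k * (d/n))) n
  have hend : u + (n:ℝ) * (d/n) = v := by
    field_simp
    rw [hd]; ring
  rw [hend] at hkey
  simp only [Nat.cast_zero, zero_mul, add_zero] at hkey
  push_cast at hkey
  have hsumle : ∑ i ∈ Finset.range n, dist (f (u + i * (d/n))) (f (u + (i+1) * (d/n)))
      ≤ ∑ _i ∈ Finset.range n, C * (d/n) := by
    apply Finset.sum_le_sum
    intro i hi
    have hiln : (i:ℝ) + 1 ≤ n := by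
      have : i < n := Finset.mem_range.1 hi
      exact_mod_cast this
    have hdn : 0 ≤ d/n := by positivity
    have h1 : a ≤ u + i * (d/n) := by nlinarith [Nat.cast_nonneg (α := ℝ) i]
    have h2 : u + i * (d/n) ≤ u + ((i:ℝ)+1) * (d/n) := by nlinarith
    have h3 : u + ((i:ℝ)+1) * (d/n) ≤ b := by
      have h5 : ((i:ℝ)+1) * (d/n) ≤ (n:ℝ) * (d/n) := by nlinarith
      linarith [hend, hvb]
    have h4 : (u + ((i:ℝ)+1) * (d/n)) - (u + i * (d/n)) = d/n := by ring
    have := H (u + i * (d/n)) (u + ((i:ℝ)+1) * (d/n)) h1 h2 h3 (by rw [h4]; exact hstep)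
    rw [h4] at this
    exact this
  have hsumconst : ∑ _i ∈ Finset.range n, C * (d/n) = C * d := by
    rw [Finset.sum_const, Finset.card_range, nsmul_eq_mul]
    field_simp
  calc dist (f u) (f v) ≤ _ := hkey
    _ ≤ C * d := by rw [← hsumconst]; exact hsumle

lemma aux_simplex_norm {ι : Type*} [Fintype ι] {x : ι → ℝ} (hx : x ∈ stdSimplex ℝ ι) :
    ‖x‖ ≤ 1 := by
  rw [pi_norm_le_iff_of_nonneg zero_le_one]
  intro i
  rw [Real.norm_eq_abs, abs_of_nonneg (hx.1 i)]
  calc x i ≤ ∑ j, x j := Finset.single_le_sum (fun j _ => hx.1 j) (Finset.mem_univ i)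
    _ = 1 := hx.2

lemma aux_simplex_nonempty {ι : Type*} [Fintype ι] [Nonempty ι] :
    Nonempty (stdSimplex ℝ ι) := by
  refine ⟨⟨fun _ => (Fintype.card ι : ℝ)⁻¹, fun i => by positivity, ?_⟩⟩
  rw [Finset.sum_const, Finset.card_univ, nsmul_eq_mul]
  rw [mul_inv_cancel₀]
  exact_mod_cast Fintype.card_ne_zero

lemma aux_bddAbove {ι : Type*} [Fintype ι] (c v : ι → ℝ) :
    BddAbove (Set.range fun q' : stdSimplex ℝ ι => ∑ i, (q'.1 i - c i) * v i) := by
  refine ⟨∑ i, (1 + |c i|) * |v i|, ?_⟩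
  rintro y ⟨q', rfl⟩
  apply Finset.sum_le_sum
  intro i _
  calc (q'.1 i - c i) * v i ≤ |(q'.1 i - c i) * v i| := le_abs_self _
    _ = |q'.1 i - c i| * |v i| := abs_mul _ _
    _ ≤ (1 + |c i|) * |v i| := by
        apply mul_le_mul_of_nonneg_right _ (abs_nonneg _)
        calc |q'.1 i - c i| ≤ |q'.1 i| + |c i| := abs_sub _ _
          _ ≤ 1 + |c i| := by
              have h1 := q'.2.1 i
              have h2 : q'.1 i ≤ 1 := by
                calc q'.1 i ≤ ∑ j, q'.1 j := Finset.single_le_sum (fun j _ => q'.2.1 j) (Finset.mem_univ i)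
                  _ = 1 := q'.2.2
              rw [abs_of_nonneg h1]
              linarith

lemma aux_bddBelow {ι : Type*} [Fintype ι] (c v : ι → ℝ) :
    BddBelow (Set.range fun q' : stdSimplex ℝ ι => ∑ i, (q'.1 i - c i) * v i) := by
  refine ⟨-∑ i, (1 + |c i|) * |v i|, ?_⟩
  rintro y ⟨q', rfl⟩
  rw [neg_le]
  rw [← Finset.sum_neg_distrib]
  apply Finset.sum_le_sum
  intro i _
  calc -((q'.1 i - c i) * v i) ≤ |(q'.1 i - c i) * v i| := neg_le_abs _
    _ = |q'.1 i - c i| * |v i| := abs_mul _ _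
    _ ≤ (1 + |c i|) * |v i| := by
        apply mul_le_mul_of_nonneg_right _ (abs_nonneg _)
        calc |q'.1 i - c i| ≤ |q'.1 i| + |c i| := abs_sub _ _
          _ ≤ 1 + |c i| := by
              have h1 := q'.2.1 i
              have h2 : q'.1 i ≤ 1 := by
                calc q'.1 i ≤ ∑ j, q'.1 j := Finset.single_le_sum (fun j _ => q'.2.1 j) (Finset.mem_univ i)
                  _ = 1 := q'.2.2
              rw [abs_of_nonneg h1]
              linarith

lemma aux_sup_le {ι : Type*} [Fintype ι] [Nonempty ι] {c v : ι → ℝ} {m : ℝ}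
    (h : ∀ q' ∈ stdSimplex ℝ ι, ∑ i, (q' i - c i) * v i ≤ m) :
    (⨆ q' : stdSimplex ℝ ι, ∑ i, (q'.1 i - c i) * v i) ≤ m := by
  haveI := aux_simplex_nonempty (ι := ι)
  exact ciSup_le (fun q' => h q'.1 q'.2)

lemma aux_le_sup {ι : Type*} [Fintype ι] {c v : ι → ℝ} {q₀ : ι → ℝ}
    (hq : q₀ ∈ stdSimplex ℝ ι) :
    ∑ i, (q₀ i - c i) * v i ≤ ⨆ q' : stdSimplex ℝ ι, ∑ i, (q'.1 i - c i) * v i :=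
  le_ciSup (aux_bddAbove c v) (⟨q₀, hq⟩ : stdSimplex ℝ ι)

lemma aux_le_inf {ι : Type*} [Fintype ι] [Nonempty ι] {c v : ι → ℝ} {m : ℝ}
    (h : ∀ q' ∈ stdSimplex ℝ ι, m ≤ ∑ i, (q' i - c i) * v i) :
    m ≤ ⨅ q' : stdSimplex ℝ ι, ∑ i, (q'.1 i - c i) * v i := by
  haveI := aux_simplex_nonempty (ι := ι)
  exact le_ciInf (fun q' => h q'.1 q'.2)

lemma aux_inf_le {ι : Type*} [Fintype ι] {c v : ι → ℝ} {q₀ : ι → ℝ}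
    (hq : q₀ ∈ stdSimplex ℝ ι) :
    (⨅ q' : stdSimplex ℝ ι, ∑ i, (q'.1 i - c i) * v i) ≤ ∑ i, (q₀ i - c i) * v i :=
  ciInf_le (aux_bddBelow c v) (⟨q₀, hq⟩ : stdSimplex ℝ ι)

end Helpers

lemma aux_sum_sub {ι : Type*} [Fintype ι] (c v q' : ι → ℝ) :
    ∑ i, (q' i - c i) * v i = (∑ i, q' i * v i) - ∑ i, c i * v i := by
  rw [← Finset.sum_sub_distrib]
  exact Finset.sum_congr rfl fun i _ => by ring

lemma aux_intervalIntegrable {E : Type*} [NormedAddCommGroup E]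
    {f : ℝ → E} (hf : LocallyIntegrable f volume) (a b : ℝ) :
    IntervalIntegrable f volume a b := by
  rw [intervalIntegrable_iff]
  exact (hf.integrableOn_isCompact isCompact_uIcc).mono_set Set.uIoc_subset_uIcc

set_option maxHeartbeats 4000000 in
/-- Lyapunov decay for the Frank–Wolfe self-play flow. If `F` is twice
continuously differentiable on an open set `U` containing the trajectory, concave in `p`
on `Δ_K` and convex in `μ` on `Δ_X`, and `(p(·), μ(·))` is an absolutely continuous
trajectory (encoded in integral form) whose a.e. derivatives are `q(t) − p(t)` and
`ν(t) − μ(t)` for Frank–Wolfe best responses `q(t)`, `ν(t)` to the linearized payoff, then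
the Lyapunov function
`V(p,μ) = max_{q'∈Δ_K}(q'−p)ᵀ∇_p F(p,μ) − min_{ν'∈Δ_X}(ν'−μ)ᵀ∇_μ F(p,μ)`
satisfies `V(p(t),μ(t)) ≤ V(p(0),μ(0)) e^{−t}` for all `t ≥ 0`. -/
theorem stmt_6 {K : ℕ} (hK : 0 < K) {X : Type*} [Fintype X] [Nonempty X]
    (F : (Fin K → ℝ) → (X → ℝ) → ℝ)
    (U : Set ((Fin K → ℝ) × (X → ℝ))) (hU : IsOpen U)
    (hF : ContDiffOn ℝ 2 (fun z : (Fin K → ℝ) × (X → ℝ) => F z.1 z.2) U)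
    (hconc : ∀ μ ∈ stdSimplex ℝ X, ConcaveOn ℝ (stdSimplex ℝ (Fin K)) (fun p' => F p' μ))
    (hconv : ∀ p ∈ stdSimplex ℝ (Fin K), ConvexOn ℝ (stdSimplex ℝ X) (fun μ' => F p μ'))
    (gradp : (Fin K → ℝ) → (X → ℝ) → (Fin K → ℝ))
    (gradm : (Fin K → ℝ) → (X → ℝ) → (X → ℝ))
    (hgradp : ∀ z ∈ U, ∃ L : (Fin K → ℝ) →L[ℝ] ℝ,
      HasFDerivAt (fun p' => F p' z.2) L z.1 ∧ ∀ w, L w = ∑ i, gradp z.1 z.2 i * w i)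
    (hgradm : ∀ z ∈ U, ∃ L : (X → ℝ) →L[ℝ] ℝ,
      HasFDerivAt (fun μ' => F z.1 μ') L z.2 ∧ ∀ w, L w = ∑ x, gradm z.1 z.2 x * w x)
    (p : ℝ → (Fin K → ℝ)) (μ : ℝ → (X → ℝ))
    (q : ℝ → (Fin K → ℝ)) (ν : ℝ → (X → ℝ))
    (hmem : ∀ t ≥ (0 : ℝ), p t ∈ stdSimplex ℝ (Fin K) ∧ μ t ∈ stdSimplex ℝ X ∧
      (p t, μ t) ∈ U)
    (hqmeas : Measurable q) (hνmeas : Measurable ν)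
    (hpc : ContinuousOn p (Set.Ici (0 : ℝ))) (hμc : ContinuousOn μ (Set.Ici (0 : ℝ)))
    (hsel : ∀ᵐ t ∂(volume.restrict (Set.Ici (0 : ℝ))),
      (q t ∈ stdSimplex ℝ (Fin K) ∧ ∀ q' ∈ stdSimplex ℝ (Fin K),
        ∑ i, q' i * gradp (p t) (μ t) i ≤ ∑ i, q t i * gradp (p t) (μ t) i) ∧
      (ν t ∈ stdSimplex ℝ X ∧ ∀ ν' ∈ stdSimplex ℝ X,
        ∑ x, ν t x * gradm (p t) (μ t) x ≤ ∑ x, ν' x * gradm (p t) (μ t) x))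
    (hodep : ∀ t ≥ (0 : ℝ), p t = p 0 + ∫ s in (0 : ℝ)..t, (q s - p s))
    (hodeμ : ∀ t ≥ (0 : ℝ), μ t = μ 0 + ∫ s in (0 : ℝ)..t, (ν s - μ s))
    (V : (Fin K → ℝ) → (X → ℝ) → ℝ)
    (hV : ∀ p' μ', V p' μ' =
      (⨆ q' : stdSimplex ℝ (Fin K), ∑ i, (q'.1 i - p' i) * gradp p' μ' i) -
      (⨅ ν' : stdSimplex ℝ X, ∑ x, (ν'.1 x - μ' x) * gradm p' μ' x)) :
    ∀ t ≥ (0 : ℝ), V (p t) (μ t) ≤ V (p 0) (μ 0) * Real.exp (-t) := by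
  classical
  haveI hneK : Nonempty (Fin K) := ⟨⟨0, hK⟩⟩
  intro T hT
  rcases eq_or_lt_of_le hT with h0 | hTpos
  · rw [← h0]; simp
  -- basic notation
  set Fu : (Fin K → ℝ) × (X → ℝ) → ℝ := fun z => F z.1 z.2 with hFu
  set D1 : ((Fin K → ℝ) × (X → ℝ)) → ((Fin K → ℝ) × (X → ℝ)) →L[ℝ] ℝ := fderiv ℝ Fu with hD1def
  have hUZ : ∀ t ≥ (0:ℝ), (p t, μ t) ∈ U := fun t ht => (hmem t ht).2.2
  have hFdiff : ∀ z ∈ U, DifferentiableAt ℝ Fu z := fun z hz =>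
    (hF.differentiableOn (by norm_num)).differentiableAt (hU.mem_nhds hz)
  have hD1cd : ContDiffOn ℝ 1 D1 U := hF.fderiv_of_isOpen hU (by norm_num)
  have hD1diff : ∀ z ∈ U, DifferentiableAt ℝ D1 z := fun z hz =>
    (hD1cd.differentiableOn (by norm_num)).differentiableAt (hU.mem_nhds hz)
  have hD1cont : ContinuousOn D1 U := hD1cd.continuousOn
  have hD2cont : ContinuousOn (fderiv ℝ D1) U :=
    hD1cd.continuousOn_fderiv_of_isOpen hU le_rfl
  -- bridge between gradp/gradm and the full derivative
  have hbridgep : ∀ z ∈ U, ∀ w : Fin K → ℝ,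
      D1 z (w, (0 : X → ℝ)) = ∑ i, gradp z.1 z.2 i * w i := by
    intro z hz w
    obtain ⟨L, hL, hLw⟩ := hgradp z hz
    have hFz : HasFDerivAt Fu (D1 z) z := (hFdiff z hz).hasFDerivAt
    have hFz' : HasFDerivAt Fu (D1 z) (z.1, z.2) := by rw [Prod.mk.eta]; exact hFz
    have hmk : HasFDerivAt (fun p' : Fin K → ℝ => (p', z.2))
        (ContinuousLinearMap.inl ℝ (Fin K → ℝ) (X → ℝ)) z.1 := hasFDerivAt_prodMk_left _ _
    have hcomp : HasFDerivAt (fun p' => F p' z.2)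
        ((D1 z).comp (ContinuousLinearMap.inl ℝ (Fin K → ℝ) (X → ℝ))) z.1 := by
      have h := hFz'.comp z.1 hmk; exact h
    have hLeq : L = (D1 z).comp (ContinuousLinearMap.inl ℝ (Fin K → ℝ) (X → ℝ)) :=
      hL.unique hcomp
    calc D1 z (w, (0 : X → ℝ))
        = ((D1 z).comp (ContinuousLinearMap.inl ℝ (Fin K → ℝ) (X → ℝ))) w := by
          rw [ContinuousLinearMap.comp_apply, ContinuousLinearMap.inl_apply]
      _ = L w := by rw [hLeq]
      _ = ∑ i, gradp z.1 z.2 i * w i := hLw w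
  have hbridgem : ∀ z ∈ U, ∀ w : X → ℝ,
      D1 z ((0 : Fin K → ℝ), w) = ∑ x, gradm z.1 z.2 x * w x := by
    intro z hz w
    obtain ⟨L, hL, hLw⟩ := hgradm z hz
    have hFz : HasFDerivAt Fu (D1 z) z := (hFdiff z hz).hasFDerivAt
    have hFz' : HasFDerivAt Fu (D1 z) (z.1, z.2) := by rw [Prod.mk.eta]; exact hFz
    have hmk : HasFDerivAt (fun μ' : X → ℝ => (z.1, μ'))
        (ContinuousLinearMap.inr ℝ (Fin K → ℝ) (X → ℝ)) z.2 := hasFDerivAt_prodMk_right _ _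
    have hcomp : HasFDerivAt (fun μ' => F z.1 μ')
        ((D1 z).comp (ContinuousLinearMap.inr ℝ (Fin K → ℝ) (X → ℝ))) z.2 := by
      have h := hFz'.comp z.2 hmk; exact h
    have hLeq : L = (D1 z).comp (ContinuousLinearMap.inr ℝ (Fin K → ℝ) (X → ℝ)) :=
      hL.unique hcomp
    calc D1 z ((0 : Fin K → ℝ), w)
        = ((D1 z).comp (ContinuousLinearMap.inr ℝ (Fin K → ℝ) (X → ℝ))) w := by
          rw [ContinuousLinearMap.comp_apply, ContinuousLinearMap.inr_apply]
      _ = L w := by rw [hLeq]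
      _ = ∑ x, gradm z.1 z.2 x * w x := hLw w
  -- the Lyapunov components
  set A : ℝ → ℝ := fun t => ⨆ q' : stdSimplex ℝ (Fin K),
    ∑ i, (q'.1 i - p t i) * gradp (p t) (μ t) i with hA
  set B : ℝ → ℝ := fun t => ⨅ ν' : stdSimplex ℝ X,
    ∑ x, (ν'.1 x - μ t x) * gradm (p t) (μ t) x with hB
  have hVAB : ∀ t : ℝ, V (p t) (μ t) = A t - B t := fun t => by
    rw [hA, hB]; exact hV (p t) (μ t)
  -- pointwise selection facts
  have hsel' : ∀ᵐ s, s ∈ Ici (0:ℝ) →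
      ((q s ∈ stdSimplex ℝ (Fin K) ∧ ∀ q' ∈ stdSimplex ℝ (Fin K),
        ∑ i, q' i * gradp (p s) (μ s) i ≤ ∑ i, q s i * gradp (p s) (μ s) i) ∧
      (ν s ∈ stdSimplex ℝ X ∧ ∀ ν' ∈ stdSimplex ℝ X,
        ∑ x, ν s x * gradm (p s) (μ s) x ≤ ∑ x, ν' x * gradm (p s) (μ s) x)) :=
    (ae_restrict_iff' measurableSet_Ici).1 hsel
  -- trajectory integrands
  set fp : ℝ → (Fin K → ℝ) := Set.indicator (Ici 0) (fun s => q s - p s) with hfp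
  set fm : ℝ → (X → ℝ) := Set.indicator (Ici 0) (fun s => ν s - μ s) with hfm
  have hfp_meas : AEStronglyMeasurable fp volume := by
    rw [hfp, aestronglyMeasurable_indicator_iff measurableSet_Ici]
    exact (hqmeas.aestronglyMeasurable.sub (hpc.aestronglyMeasurable measurableSet_Ici))
  have hfm_meas : AEStronglyMeasurable fm volume := by
    rw [hfm, aestronglyMeasurable_indicator_iff measurableSet_Ici]
    exact (hνmeas.aestronglyMeasurable.sub (hμc.aestronglyMeasurable measurableSet_Ici))
  have hfp_bd : ∀ᵐ s, ‖fp s‖ ≤ 2 := by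
    filter_upwards [hsel'] with s hs
    rw [hfp]
    by_cases hsI : s ∈ Ici (0:ℝ)
    · rw [Set.indicator_of_mem hsI]
      have h1 : ‖q s‖ ≤ 1 := aux_simplex_norm ((hs hsI).1.1)
      have h2 : ‖p s‖ ≤ 1 := aux_simplex_norm (hmem s hsI).1
      calc ‖q s - p s‖ ≤ ‖q s‖ + ‖p s‖ := norm_sub_le _ _
        _ ≤ 2 := by linarith
    · rw [Set.indicator_of_notMem hsI]; simp
  have hfm_bd : ∀ᵐ s, ‖fm s‖ ≤ 2 := by
    filter_upwards [hsel'] with s hs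
    rw [hfm]
    by_cases hsI : s ∈ Ici (0:ℝ)
    · rw [Set.indicator_of_mem hsI]
      have h1 : ‖ν s‖ ≤ 1 := aux_simplex_norm ((hs hsI).2.1)
      have h2 : ‖μ s‖ ≤ 1 := aux_simplex_norm (hmem s hsI).2.1
      calc ‖ν s - μ s‖ ≤ ‖ν s‖ + ‖μ s‖ := norm_sub_le _ _
        _ ≤ 2 := by linarith
    · rw [Set.indicator_of_notMem hsI]; simp
  have hfp_loc : LocallyIntegrable fp volume := by
    rw [MeasureTheory.locallyIntegrable_iff]
    intro k hk
    apply Integrable.mono' (g := fun _ => (2:ℝ))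
      (MeasureTheory.integrableOn_const hk.measure_lt_top.ne) hfp_meas.restrict
    exact ae_restrict_of_ae hfp_bd
  have hfm_loc : LocallyIntegrable fm volume := by
    rw [MeasureTheory.locallyIntegrable_iff]
    intro k hk
    apply Integrable.mono' (g := fun _ => (2:ℝ))
      (MeasureTheory.integrableOn_const hk.measure_lt_top.ne) hfm_meas.restrict
    exact ae_restrict_of_ae hfm_bd
  -- primitives
  set Pp : ℝ → (Fin K → ℝ) := fun t => p 0 + ∫ u in (0:ℝ)..t, fp u with hPpdef
  set Pm : ℝ → (X → ℝ) := fun t => μ 0 + ∫ u in (0:ℝ)..t, fm u with hPmdef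
  have hPp_eq : ∀ t ≥ (0:ℝ), p t = Pp t := by
    intro t ht
    rw [hPpdef, hodep t ht]
    simp only
    congr 1
    apply intervalIntegral.integral_congr
    intro u hu
    rw [uIcc_of_le ht] at hu
    rw [hfp, Set.indicator_of_mem (show u ∈ Ici (0:ℝ) from hu.1)]
  have hPm_eq : ∀ t ≥ (0:ℝ), μ t = Pm t := by
    intro t ht
    rw [hPmdef, hodeμ t ht]
    simp only
    congr 1
    apply intervalIntegral.integral_congr
    intro u hu
    rw [uIcc_of_le ht] at hu
    rw [hfm, Set.indicator_of_mem (show u ∈ Ici (0:ℝ) from hu.1)]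
  have hPpd : ∀ᵐ s, HasDerivAt Pp (fp s) s := by
    filter_upwards [aux_ae_hasDerivAt fp hfp_loc] with s hs
    exact hs.const_add (p 0)
  have hPmd : ∀ᵐ s, HasDerivAt Pm (fm s) s := by
    filter_upwards [aux_ae_hasDerivAt fm hfm_loc] with s hs
    exact hs.const_add (μ 0)
  have hPp_lip : ∀ u v : ℝ, ‖Pp v - Pp u‖ ≤ 2 * |v - u| := by
    intro u v
    have h1 : Pp v - Pp u = ∫ s in u..v, fp s := by
      rw [hPpdef]
      simp only
      rw [← intervalIntegral.integral_add_adjacent_intervals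
        (aux_intervalIntegrable hfp_loc 0 u) (aux_intervalIntegrable hfp_loc u v)]
      abel
    rw [h1]
    have hnb := intervalIntegral.norm_integral_le_abs_of_norm_le (a := u) (b := v) (f := fp)
      (g := fun _ => (2:ℝ)) (μ := volume) (ae_restrict_of_ae hfp_bd) intervalIntegrable_const
    calc ‖∫ s in u..v, fp s‖ ≤ |∫ _s in u..v, (2:ℝ)| := hnb
      _ = 2 * |v - u| := by rw [intervalIntegral.integral_const, smul_eq_mul, abs_mul]; norm_num; ring
  have hPm_lip : ∀ u v : ℝ, ‖Pm v - Pm u‖ ≤ 2 * |v - u| := by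
    intro u v
    have h1 : Pm v - Pm u = ∫ s in u..v, fm s := by
      rw [hPmdef]
      simp only
      rw [← intervalIntegral.integral_add_adjacent_intervals
        (aux_intervalIntegrable hfm_loc 0 u) (aux_intervalIntegrable hfm_loc u v)]
      abel
    rw [h1]
    have hnb := intervalIntegral.norm_integral_le_abs_of_norm_le (a := u) (b := v) (f := fm)
      (g := fun _ => (2:ℝ)) (μ := volume) (ae_restrict_of_ae hfm_bd) intervalIntegrable_const
    calc ‖∫ s in u..v, fm s‖ ≤ |∫ _s in u..v, (2:ℝ)| := hnb
      _ = 2 * |v - u| := by rw [intervalIntegral.integral_const, smul_eq_mul, abs_mul]; norm_num; ring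
  have hZ_lip : ∀ u ∈ Icc (0:ℝ) T, ∀ v ∈ Icc (0:ℝ) T,
      ‖(p v, μ v) - (p u, μ u)‖ ≤ 2 * |v - u| := by
    intro u hu v hv
    rw [hPp_eq u hu.1, hPp_eq v hv.1, hPm_eq u hu.1, hPm_eq v hv.1]
    rw [Prod.norm_def]
    exact max_le (hPp_lip u v) (hPm_lip u v)
  -- compactness
  have hZcont : ContinuousOn (fun t => (p t, μ t)) (Icc 0 T) :=
    (hpc.mono (Icc_subset_Ici_self)).prodMk (hμc.mono Icc_subset_Ici_self)
  set k : Set ((Fin K → ℝ) × (X → ℝ)) := (fun t => (p t, μ t)) '' (Icc 0 T) with hkdef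
  have hkcpt : IsCompact k := (isCompact_Icc).image_of_continuousOn hZcont
  have hkU : k ⊆ U := by rintro _ ⟨t, ht, rfl⟩; exact hUZ t ht.1
  have hZmem : ∀ t ∈ Icc (0:ℝ) T, (p t, μ t) ∈ k := fun t ht => mem_image_of_mem _ ht
  obtain ⟨ε, hεpos, hεsub⟩ := hkcpt.exists_cthickening_subset_open hU hkU
  have hk'cpt : IsCompact (cthickening ε k) := hkcpt.cthickening
  obtain ⟨M2, hM2⟩ := hk'cpt.exists_bound_of_continuousOn (f := fderiv ℝ D1) (hD2cont.mono hεsub)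
  obtain ⟨M1, hM1⟩ := hkcpt.exists_bound_of_continuousOn (f := D1) (hD1cont.mono hkU)
  have hz0k : (p 0, μ 0) ∈ k := hZmem 0 ⟨le_refl _, hT⟩
  have hM1nn : 0 ≤ M1 := le_trans (norm_nonneg _) (hM1 _ hz0k)
  have hM2nn : 0 ≤ M2 := le_trans (norm_nonneg _) (hM2 _ (self_subset_cthickening k hz0k))
  -- local Lipschitz property of D1 on k
  have hD1lip : ∀ z1 ∈ k, ∀ z2 ∈ k, dist z1 z2 ≤ ε → ‖D1 z2 - D1 z1‖ ≤ M2 * ‖z2 - z1‖ := by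
    intro z1 hz1 z2 hz2 hd
    have hseg : segment ℝ z1 z2 ⊆ cthickening ε k := by
      intro y hy
      obtain ⟨θ1, θ2, h1, h2, hsum, rfl⟩ := hy
      apply mem_cthickening_of_dist_le _ z1 ε k hz1
      have hv : θ1 • z1 + θ2 • z2 - z1 = θ2 • (z2 - z1) := by
        have hθ1 : θ1 = 1 - θ2 := by linarith
        rw [hθ1, smul_sub]
        module
      rw [dist_eq_norm, hv, norm_smul]
      calc ‖θ2‖ * ‖z2 - z1‖ ≤ 1 * ‖z2 - z1‖ := by
            apply mul_le_mul_of_nonneg_right _ (norm_nonneg _)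
            rw [Real.norm_eq_abs, abs_of_nonneg h2]; linarith
        _ = dist z1 z2 := by rw [one_mul, dist_eq_norm, norm_sub_rev]
        _ ≤ ε := hd
    exact Convex.norm_image_sub_le_of_norm_hasFDerivWithin_le
      (fun y hy => (hD1diff y (hεsub (hseg hy))).hasFDerivAt.hasFDerivWithinAt)
      (fun y hy => hM2 y (hseg hy)) (convex_segment z1 z2)
      (left_mem_segment ℝ z1 z2) (right_mem_segment ℝ z1 z2)
  -- Lipschitz bound for t ↦ D1 (p t, μ t) on [0, T]
  have hDZchain : ∀ u v : ℝ, 0 ≤ u → u ≤ v → v ≤ T →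
      ‖D1 (p v, μ v) - D1 (p u, μ u)‖ ≤ (2 * M2) * (v - u) := by
    have hsmall : ∀ u v : ℝ, 0 ≤ u → u ≤ v → v ≤ T → v - u ≤ ε/2 →
        dist (D1 (p u, μ u)) (D1 (p v, μ v)) ≤ (2*M2) * (v - u) := by
      intro u v h0u huv hvT hgap
      have hu : u ∈ Icc (0:ℝ) T := ⟨h0u, le_trans huv hvT⟩
      have hv : v ∈ Icc (0:ℝ) T := ⟨le_trans h0u huv, hvT⟩
      have hZd : ‖(p v, μ v) - (p u, μ u)‖ ≤ 2 * (v - u) := by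
        have := hZ_lip u hu v hv
        rwa [abs_of_nonneg (by linarith)] at this
      have hde : dist (p u, μ u) (p v, μ v) ≤ ε := by
        rw [dist_eq_norm, norm_sub_rev]
        linarith
      have := hD1lip (p u, μ u) (hZmem u hu) (p v, μ v) (hZmem v hv) hde
      rw [dist_eq_norm, norm_sub_rev]
      calc ‖D1 (p v, μ v) - D1 (p u, μ u)‖ ≤ M2 * ‖(p v, μ v) - (p u, μ u)‖ := this
        _ ≤ M2 * (2 * (v - u)) := mul_le_mul_of_nonneg_left hZd hM2nn
        _ = (2*M2) * (v - u) := by ring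
    intro u v h0u huv hvT
    have := aux_chain (fun t => D1 (p t, μ t)) (half_pos hεpos) (by positivity)
      (fun u v h1 h2 h3 h4 => hsmall u v h1 h2 h3 h4) u v h0u huv hvT
    rw [dist_eq_norm, norm_sub_rev] at this
    exact this
  -- Lipschitz and boundedness of A and B on [0, T]
  set LA : ℝ := 2 * (2 * M2) + 2 * M1 with hLA
  have hLAnn : 0 ≤ LA := by positivity
  -- evaluation of the linearized payoffs through D1
  have hAeval : ∀ t ≥ (0:ℝ), ∀ q₀ : Fin K → ℝ,
      ∑ i, (q₀ i - p t i) * gradp (p t) (μ t) i = D1 (p t, μ t) (q₀ - p t, (0 : X → ℝ)) := by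
    intro t ht q₀
    rw [hbridgep (p t, μ t) (hUZ t ht)]
    exact Finset.sum_congr rfl fun i _ => by rw [Pi.sub_apply, mul_comm]
  have hBeval : ∀ t ≥ (0:ℝ), ∀ ν₀ : X → ℝ,
      ∑ x, (ν₀ x - μ t x) * gradm (p t) (μ t) x = D1 (p t, μ t) ((0 : Fin K → ℝ), ν₀ - μ t) := by
    intro t ht ν₀
    rw [hbridgem (p t, μ t) (hUZ t ht)]
    exact Finset.sum_congr rfl fun x _ => by rw [Pi.sub_apply, mul_comm]
  have hDZsym : ∀ u ∈ Icc (0:ℝ) T, ∀ v ∈ Icc (0:ℝ) T,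
      ‖D1 (p v, μ v) - D1 (p u, μ u)‖ ≤ (2 * M2) * |v - u| := by
    intro u hu v hv
    rcases le_total u v with hle | hle
    · rw [abs_of_nonneg (by linarith)]
      exact hDZchain u v hu.1 hle hv.2
    · rw [abs_of_nonpos (by linarith), norm_sub_rev]
      have := hDZchain v u hv.1 hle hu.2
      linarith
  have hv2 : ∀ t ≥ (0:ℝ), ∀ q₀ ∈ stdSimplex ℝ (Fin K),
      ‖((q₀ - p t : Fin K → ℝ), (0 : X → ℝ))‖ ≤ 2 := by
    intro t ht q₀ hq₀
    rw [Prod.norm_def]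
    apply max_le _ (by norm_num)
    calc ‖q₀ - p t‖ ≤ ‖q₀‖ + ‖p t‖ := norm_sub_le _ _
      _ ≤ 2 := by
          have := aux_simplex_norm hq₀
          have := aux_simplex_norm (hmem t ht).1
          linarith
  have hv2' : ∀ t ≥ (0:ℝ), ∀ ν₀ ∈ stdSimplex ℝ X,
      ‖((0 : Fin K → ℝ), (ν₀ - μ t : X → ℝ))‖ ≤ 2 := by
    intro t ht ν₀ hν₀
    rw [Prod.norm_def]
    apply max_le (by norm_num)
    calc ‖ν₀ - μ t‖ ≤ ‖ν₀‖ + ‖μ t‖ := norm_sub_le _ _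
      _ ≤ 2 := by
          have := aux_simplex_norm hν₀
          have := aux_simplex_norm (hmem t ht).2.1
          linarith
  have hvaldiff : ∀ u ∈ Icc (0:ℝ) T, ∀ v ∈ Icc (0:ℝ) T, ∀ q₀ ∈ stdSimplex ℝ (Fin K),
      |D1 (p v, μ v) (q₀ - p v, (0 : X → ℝ)) - D1 (p u, μ u) (q₀ - p u, (0 : X → ℝ))|
        ≤ LA * |v - u| := by
    intro u hu v hv q₀ hq₀
    have hsplit : D1 (p v, μ v) (q₀ - p v, (0 : X → ℝ)) - D1 (p u, μ u) (q₀ - p u, (0 : X → ℝ))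
        = (D1 (p v, μ v) - D1 (p u, μ u)) (q₀ - p v, (0 : X → ℝ))
          + D1 (p u, μ u) ((p u - p v : Fin K → ℝ), (0 : X → ℝ)) := by
      rw [ContinuousLinearMap.sub_apply]
      have : ((p u - p v : Fin K → ℝ), (0 : X → ℝ))
          = ((q₀ - p v : Fin K → ℝ), (0 : X → ℝ)) - ((q₀ - p u : Fin K → ℝ), (0 : X → ℝ)) := by
        rw [Prod.mk_sub_mk]
        congr 1
        · abel
        · abel
      rw [this, map_sub]
      abel
    rw [hsplit]
    have h1 : |(D1 (p v, μ v) - D1 (p u, μ u)) (q₀ - p v, (0 : X → ℝ))|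
        ≤ (2 * M2) * |v - u| * 2 := by
      calc |(D1 (p v, μ v) - D1 (p u, μ u)) (q₀ - p v, (0 : X → ℝ))|
          ≤ ‖D1 (p v, μ v) - D1 (p u, μ u)‖ * ‖((q₀ - p v : Fin K → ℝ), (0 : X → ℝ))‖ :=
            (D1 (p v, μ v) - D1 (p u, μ u)).le_opNorm _
        _ ≤ ((2 * M2) * |v - u|) * 2 := by
            apply mul_le_mul (hDZsym u hu v hv) (hv2 v hv.1 q₀ hq₀) (norm_nonneg _)
            positivity
    have h2 : |D1 (p u, μ u) ((p u - p v : Fin K → ℝ), (0 : X → ℝ))| ≤ M1 * (2 * |v - u|) := by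
      calc |D1 (p u, μ u) ((p u - p v : Fin K → ℝ), (0 : X → ℝ))|
          ≤ ‖D1 (p u, μ u)‖ * ‖((p u - p v : Fin K → ℝ), (0 : X → ℝ))‖ :=
            (D1 (p u, μ u)).le_opNorm _
        _ ≤ M1 * (2 * |v - u|) := by
            apply mul_le_mul (hM1 _ (hZmem u hu)) _ (norm_nonneg _) hM1nn
            rw [Prod.norm_def]
            have h0n : ‖(0 : X → ℝ)‖ ≤ 2 * |v - u| := by rw [norm_zero]; positivity
            apply max_le _ h0n
            calc ‖p u - p v‖ = ‖Pp u - Pp v‖ := by rw [hPp_eq u hu.1, hPp_eq v hv.1]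
              _ ≤ 2 * |u - v| := hPp_lip v u
              _ = 2 * |v - u| := by rw [abs_sub_comm]
    calc |(D1 (p v, μ v) - D1 (p u, μ u)) (q₀ - p v, (0 : X → ℝ))
          + D1 (p u, μ u) ((p u - p v : Fin K → ℝ), (0 : X → ℝ))|
        ≤ |(D1 (p v, μ v) - D1 (p u, μ u)) (q₀ - p v, (0 : X → ℝ))|
          + |D1 (p u, μ u) ((p u - p v : Fin K → ℝ), (0 : X → ℝ))| := abs_add_le _ _
      _ ≤ LA * |v - u| := by
          have heq : LA * |v - u| = (2 * M2) * |v - u| * 2 + M1 * (2 * |v - u|) := by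
            rw [hLA]; ring
          linarith [h1, h2]
  have hvaldiffm : ∀ u ∈ Icc (0:ℝ) T, ∀ v ∈ Icc (0:ℝ) T, ∀ ν₀ ∈ stdSimplex ℝ X,
      |D1 (p v, μ v) ((0 : Fin K → ℝ), ν₀ - μ v) - D1 (p u, μ u) ((0 : Fin K → ℝ), ν₀ - μ u)|
        ≤ LA * |v - u| := by
    intro u hu v hv ν₀ hν₀
    have hsplit : D1 (p v, μ v) ((0 : Fin K → ℝ), ν₀ - μ v) - D1 (p u, μ u) ((0 : Fin K → ℝ), ν₀ - μ u)
        = (D1 (p v, μ v) - D1 (p u, μ u)) ((0 : Fin K → ℝ), ν₀ - μ v)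
          + D1 (p u, μ u) ((0 : Fin K → ℝ), (μ u - μ v : X → ℝ)) := by
      rw [ContinuousLinearMap.sub_apply]
      have : ((0 : Fin K → ℝ), (μ u - μ v : X → ℝ))
          = ((0 : Fin K → ℝ), (ν₀ - μ v : X → ℝ)) - ((0 : Fin K → ℝ), (ν₀ - μ u : X → ℝ)) := by
        rw [Prod.mk_sub_mk]
        congr 1
        · abel
        · abel
      rw [this, map_sub]
      abel
    rw [hsplit]
    have h1 : |(D1 (p v, μ v) - D1 (p u, μ u)) ((0 : Fin K → ℝ), ν₀ - μ v)|
        ≤ (2 * M2) * |v - u| * 2 := by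
      calc |(D1 (p v, μ v) - D1 (p u, μ u)) ((0 : Fin K → ℝ), ν₀ - μ v)|
          ≤ ‖D1 (p v, μ v) - D1 (p u, μ u)‖ * ‖((0 : Fin K → ℝ), (ν₀ - μ v : X → ℝ))‖ :=
            (D1 (p v, μ v) - D1 (p u, μ u)).le_opNorm _
        _ ≤ ((2 * M2) * |v - u|) * 2 := by
            apply mul_le_mul (hDZsym u hu v hv) (hv2' v hv.1 ν₀ hν₀) (norm_nonneg _)
            positivity
    have h2 : |D1 (p u, μ u) ((0 : Fin K → ℝ), (μ u - μ v : X → ℝ))| ≤ M1 * (2 * |v - u|) := by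
      calc |D1 (p u, μ u) ((0 : Fin K → ℝ), (μ u - μ v : X → ℝ))|
          ≤ ‖D1 (p u, μ u)‖ * ‖((0 : Fin K → ℝ), (μ u - μ v : X → ℝ))‖ :=
            (D1 (p u, μ u)).le_opNorm _
        _ ≤ M1 * (2 * |v - u|) := by
            apply mul_le_mul (hM1 _ (hZmem u hu)) _ (norm_nonneg _) hM1nn
            rw [Prod.norm_def]
            have h0n : ‖(0 : Fin K → ℝ)‖ ≤ 2 * |v - u| := by rw [norm_zero]; positivity
            apply max_le h0n
            calc ‖μ u - μ v‖ = ‖Pm u - Pm v‖ := by rw [hPm_eq u hu.1, hPm_eq v hv.1]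
              _ ≤ 2 * |u - v| := hPm_lip v u
              _ = 2 * |v - u| := by rw [abs_sub_comm]
    calc |(D1 (p v, μ v) - D1 (p u, μ u)) ((0 : Fin K → ℝ), ν₀ - μ v)
          + D1 (p u, μ u) ((0 : Fin K → ℝ), (μ u - μ v : X → ℝ))|
        ≤ |(D1 (p v, μ v) - D1 (p u, μ u)) ((0 : Fin K → ℝ), ν₀ - μ v)|
          + |D1 (p u, μ u) ((0 : Fin K → ℝ), (μ u - μ v : X → ℝ))| := abs_add_le _ _
      _ ≤ LA * |v - u| := by
          have heq : LA * |v - u| = (2 * M2) * |v - u| * 2 + M1 * (2 * |v - u|) := by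
            rw [hLA]; ring
          linarith [h1, h2]
  have hAone : ∀ u ∈ Icc (0:ℝ) T, ∀ v ∈ Icc (0:ℝ) T, A v ≤ A u + LA * |v - u| := by
    intro u hu v hv
    rw [hA]
    apply aux_sup_le
    intro q' hq'
    have he_v := hAeval v hv.1 q'
    have he_u := hAeval u hu.1 q'
    have hd := hvaldiff u hu v hv q' hq'
    have hle : D1 (p v, μ v) (q' - p v, (0 : X → ℝ))
        ≤ D1 (p u, μ u) (q' - p u, (0 : X → ℝ)) + LA * |v - u| := by
      have := (abs_le.1 hd).2
      linarith
    calc ∑ i, (q' i - p v i) * gradp (p v) (μ v) i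
        = D1 (p v, μ v) (q' - p v, (0 : X → ℝ)) := he_v
      _ ≤ D1 (p u, μ u) (q' - p u, (0 : X → ℝ)) + LA * |v - u| := hle
      _ = (∑ i, (q' i - p u i) * gradp (p u) (μ u) i) + LA * |v - u| := by rw [he_u]
      _ ≤ (⨆ q'' : stdSimplex ℝ (Fin K), ∑ i, (q''.1 i - p u i) * gradp (p u) (μ u) i)
            + LA * |v - u| := by
          have := aux_le_sup (c := p u) (v := gradp (p u) (μ u)) hq'
          linarith
  have hALip : ∀ u ∈ Icc (0:ℝ) T, ∀ v ∈ Icc (0:ℝ) T, |A v - A u| ≤ LA * |v - u| := by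
    intro u hu v hv
    rw [abs_sub_le_iff]
    constructor
    · have := hAone u hu v hv; linarith
    · have := hAone v hv u hu; rw [abs_sub_comm] at this; linarith
  have hBone : ∀ u ∈ Icc (0:ℝ) T, ∀ v ∈ Icc (0:ℝ) T, B u - LA * |v - u| ≤ B v := by
    intro u hu v hv
    rw [hB]
    apply aux_le_inf
    intro ν' hν'
    have he_v := hBeval v hv.1 ν'
    have he_u := hBeval u hu.1 ν'
    have hd := hvaldiffm u hu v hv ν' hν'
    have hge : D1 (p u, μ u) ((0 : Fin K → ℝ), ν' - μ u) - LA * |v - u|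
        ≤ D1 (p v, μ v) ((0 : Fin K → ℝ), ν' - μ v) := by
      have := (abs_le.1 hd).1
      linarith
    have hinf := aux_inf_le (c := μ u) (v := gradm (p u) (μ u)) hν'
    calc B u - LA * |v - u|
        ≤ (∑ x, (ν' x - μ u x) * gradm (p u) (μ u) x) - LA * |v - u| := by
          rw [hB]; simp only; linarith [hinf]
      _ = D1 (p u, μ u) ((0 : Fin K → ℝ), ν' - μ u) - LA * |v - u| := by rw [he_u]
      _ ≤ D1 (p v, μ v) ((0 : Fin K → ℝ), ν' - μ v) := hge
      _ = ∑ x, (ν' x - μ v x) * gradm (p v) (μ v) x := he_v.symm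
  have hBLip : ∀ u ∈ Icc (0:ℝ) T, ∀ v ∈ Icc (0:ℝ) T, |B v - B u| ≤ LA * |v - u| := by
    intro u hu v hv
    rw [abs_sub_le_iff]
    constructor
    · have := hBone v hv u hu; rw [abs_sub_comm] at this; linarith
    · have := hBone u hu v hv; linarith
  have hAbd : ∀ t ∈ Icc (0:ℝ) T, |A t| ≤ 2 * M1 := by
    intro t ht
    have hub : A t ≤ 2 * M1 := by
      rw [hA]
      apply aux_sup_le
      intro q' hq'
      rw [hAeval t ht.1 q']
      calc D1 (p t, μ t) (q' - p t, (0 : X → ℝ))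
          ≤ |D1 (p t, μ t) (q' - p t, (0 : X → ℝ))| := le_abs_self _
        _ ≤ ‖D1 (p t, μ t)‖ * ‖((q' - p t : Fin K → ℝ), (0 : X → ℝ))‖ :=
            (D1 (p t, μ t)).le_opNorm _
        _ ≤ M1 * 2 := mul_le_mul (hM1 _ (hZmem t ht)) (hv2 t ht.1 q' hq') (norm_nonneg _) hM1nn
        _ = 2 * M1 := by ring
    have hlb : 0 ≤ A t := by
      have := aux_le_sup (c := p t) (v := gradp (p t) (μ t)) (hmem t ht.1).1
      simp only [sub_self, zero_mul, Finset.sum_const_zero] at this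
      rw [hA]
      exact this
    rw [abs_le]
    constructor
    · linarith
    · exact hub
  have hBbd : ∀ t ∈ Icc (0:ℝ) T, |B t| ≤ 2 * M1 := by
    intro t ht
    have hub : B t ≤ 0 := by
      have := aux_inf_le (c := μ t) (v := gradm (p t) (μ t)) (hmem t ht.1).2.1
      simp only [sub_self, zero_mul, Finset.sum_const_zero] at this
      rw [hB]
      exact this
    have hlb : -(2 * M1) ≤ B t := by
      rw [hB]
      apply aux_le_inf
      intro ν' hν'
      rw [hBeval t ht.1 ν']
      have habs : |D1 (p t, μ t) ((0 : Fin K → ℝ), ν' - μ t)| ≤ 2 * M1 := by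
        calc |D1 (p t, μ t) ((0 : Fin K → ℝ), ν' - μ t)|
            ≤ ‖D1 (p t, μ t)‖ * ‖((0 : Fin K → ℝ), (ν' - μ t : X → ℝ))‖ :=
              (D1 (p t, μ t)).le_opNorm _
          _ ≤ M1 * 2 := mul_le_mul (hM1 _ (hZmem t ht)) (hv2' t ht.1 ν' hν') (norm_nonneg _) hM1nn
          _ = 2 * M1 := by ring
      linarith [(abs_le.1 habs).1]
    rw [abs_le]
    constructor
    · exact hlb
    · linarith
  -- clamped versions
  set cl : ℝ → ℝ := fun t => max 0 (min t T) with hcl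
  have hcl_mem : ∀ t, cl t ∈ Icc (0:ℝ) T := by
    intro t
    constructor
    · exact le_max_left _ _
    · rw [hcl]
      simp only [max_le_iff]
      exact ⟨hT, min_le_right _ _⟩
  have hcl_id : ∀ t ∈ Icc (0:ℝ) T, cl t = t := by
    intro t ht
    rw [hcl]
    simp only
    rw [min_eq_left ht.2, max_eq_right ht.1]
  have hcl_lip : ∀ u v : ℝ, |cl v - cl u| ≤ |v - u| := by
    intro u v
    rw [hcl]
    simp only
    calc |max 0 (min v T) - max 0 (min u T)| ≤ |min v T - min u T| := by
          rw [max_comm 0 (min v T), max_comm 0 (min u T)]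
          exact abs_max_sub_max_le_abs _ _ _
      _ ≤ |v - u| := by
          refine le_trans (abs_min_sub_min_le_max _ _ _ _) ?_
          simp
  set AE : ℝ → ℝ := fun t => A (cl t) with hAE
  set BE : ℝ → ℝ := fun t => B (cl t) with hBE
  have hAE_lip : LipschitzWith (Real.toNNReal LA) AE := by
    rw [lipschitzWith_iff_dist_le_mul]
    intro u v
    rw [Real.dist_eq, Real.dist_eq, Real.coe_toNNReal _ hLAnn]
    calc |AE u - AE v| = |A (cl u) - A (cl v)| := rfl
      _ ≤ LA * |cl u - cl v| := hALip (cl v) (hcl_mem v) (cl u) (hcl_mem u)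
      _ ≤ LA * |u - v| := mul_le_mul_of_nonneg_left (hcl_lip v u) hLAnn
  have hBE_lip : LipschitzWith (Real.toNNReal LA) BE := by
    rw [lipschitzWith_iff_dist_le_mul]
    intro u v
    rw [Real.dist_eq, Real.dist_eq, Real.coe_toNNReal _ hLAnn]
    calc |BE u - BE v| = |B (cl u) - B (cl v)| := rfl
      _ ≤ LA * |cl u - cl v| := hBLip (cl v) (hcl_mem v) (cl u) (hcl_mem u)
      _ ≤ LA * |u - v| := mul_le_mul_of_nonneg_left (hcl_lip v u) hLAnn
  -- the Lyapunov-along-flow function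
  set h : ℝ → ℝ := fun t => Real.exp (min t T) * (AE t - BE t) with hh
  have hh_lip : ∃ Lh : NNReal, LipschitzWith Lh h := by
    refine ⟨Real.toNNReal (Real.exp T * (2*LA) + (4*M1+1) * Real.exp T), ?_⟩
    rw [lipschitzWith_iff_dist_le_mul]
    intro u v
    rw [Real.dist_eq, Real.dist_eq, Real.coe_toNNReal _ (by positivity)]
    have hGbd : ∀ t : ℝ, |AE t - BE t| ≤ 4*M1+1 := by
      intro t
      have h1 := hAbd (cl t) (hcl_mem t)
      have h2 := hBbd (cl t) (hcl_mem t)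
      calc |AE t - BE t| = |A (cl t) - B (cl t)| := rfl
        _ ≤ |A (cl t)| + |B (cl t)| := abs_sub _ _
        _ ≤ 4*M1+1 := by linarith
    have hGlip : ∀ u v : ℝ, |(AE u - BE u) - (AE v - BE v)| ≤ (2*LA) * |u - v| := by
      intro u v
      have h1 : |AE u - AE v| ≤ LA * |u - v| := by
        calc |AE u - AE v| = |A (cl u) - A (cl v)| := rfl
          _ ≤ LA * |cl u - cl v| := hALip (cl v) (hcl_mem v) (cl u) (hcl_mem u)
          _ ≤ LA * |u - v| := mul_le_mul_of_nonneg_left (hcl_lip v u) hLAnn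
      have h2 : |BE u - BE v| ≤ LA * |u - v| := by
        calc |BE u - BE v| = |B (cl u) - B (cl v)| := rfl
          _ ≤ LA * |cl u - cl v| := hBLip (cl v) (hcl_mem v) (cl u) (hcl_mem u)
          _ ≤ LA * |u - v| := mul_le_mul_of_nonneg_left (hcl_lip v u) hLAnn
      calc |(AE u - BE u) - (AE v - BE v)| = |(AE u - AE v) - (BE u - BE v)| := by ring_nf
        _ ≤ |AE u - AE v| + |BE u - BE v| := abs_sub _ _
        _ ≤ (2*LA) * |u - v| := by linarith
    have hEbd : ∀ t : ℝ, |Real.exp (min t T)| ≤ Real.exp T := by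
      intro t
      rw [abs_of_pos (Real.exp_pos _)]
      exact Real.exp_le_exp.2 (min_le_right _ _)
    have hminlip : ∀ u v : ℝ, |min u T - min v T| ≤ |u - v| := by
      intro u v
      refine le_trans (abs_min_sub_min_le_max _ _ _ _) ?_
      simp
    have hkey : ∀ c d : ℝ, c ≤ d → d ≤ T → Real.exp d - Real.exp c ≤ Real.exp T * (d - c) := by
      intro c d hcd hdT
      have htan := Real.add_one_le_exp (c - d)
      have h3 : Real.exp (c - d) * Real.exp d = Real.exp c := by
        rw [← Real.exp_add]; ring_nf
      have hdpos := Real.exp_pos d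
      have hT' := Real.exp_le_exp.2 hdT
      nlinarith [Real.exp_pos c]
    have hElip : ∀ u v : ℝ, |Real.exp (min u T) - Real.exp (min v T)| ≤ Real.exp T * |u - v| := by
      intro u v
      rcases le_total (min u T) (min v T) with hle | hle
      · rw [abs_of_nonpos (sub_nonpos.2 (Real.exp_le_exp.2 hle))]
        have h1 := hkey (min u T) (min v T) hle (min_le_right _ _)
        have h2 : min v T - min u T ≤ |u - v| := by
          have h3 := (abs_le.1 (hminlip v u)).2
          rw [abs_sub_comm v u] at h3
          exact h3
        nlinarith [Real.exp_pos T]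
      · rw [abs_of_nonneg (sub_nonneg.2 (Real.exp_le_exp.2 hle))]
        have h1 := hkey (min v T) (min u T) hle (min_le_right _ _)
        have h2 : min u T - min v T ≤ |u - v| := (abs_le.1 (hminlip u v)).2
        nlinarith [Real.exp_pos T]
    have hsplit : h u - h v = Real.exp (min u T) * ((AE u - BE u) - (AE v - BE v))
        + (Real.exp (min u T) - Real.exp (min v T)) * (AE v - BE v) := by
      rw [hh]; ring
    rw [hsplit]
    calc |Real.exp (min u T) * ((AE u - BE u) - (AE v - BE v))
          + (Real.exp (min u T) - Real.exp (min v T)) * (AE v - BE v)|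
        ≤ |Real.exp (min u T) * ((AE u - BE u) - (AE v - BE v))|
          + |(Real.exp (min u T) - Real.exp (min v T)) * (AE v - BE v)| := abs_add_le _ _
      _ ≤ Real.exp T * ((2*LA) * |u - v|) + (Real.exp T * |u - v|) * (4*M1+1) := by
          rw [abs_mul, abs_mul]
          have e1 := mul_le_mul (hEbd u) (hGlip u v) (abs_nonneg _) (le_of_lt (Real.exp_pos T))
          have e2 := mul_le_mul (hElip u v) (hGbd v) (abs_nonneg _) (by positivity)
          exact add_le_add e1 e2
      _ = (Real.exp T * (2*LA) + (4*M1+1) * Real.exp T) * |u - v| := by ring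
  obtain ⟨Lh, hh_lip⟩ := hh_lip
  -- a.e. differentiability
  have hAEdiff : ∀ᵐ s, DifferentiableAt ℝ AE s := hAE_lip.ae_differentiableAt_of_real
  have hBEdiff : ∀ᵐ s, DifferentiableAt ℝ BE s := hBE_lip.ae_differentiableAt_of_real
  -- the crux: a.e. derivative bound
  have hcrux : ∀ᵐ s, s ∈ Ioo (0:ℝ) T → DifferentiableAt ℝ h s → deriv h s ≤ 0 := by
    filter_upwards [hsel', hPpd, hPmd, hAEdiff, hBEdiff] with s hsels hPps hPms hAEs hBEs
    intro hsIoo _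
    have hs0 : (0:ℝ) ≤ s := le_of_lt hsIoo.1
    have hzU : (p s, μ s) ∈ U := hUZ s hs0
    obtain ⟨⟨hqΔ, hqmax⟩, hνΔ, hνmin⟩ := hsels hs0
    -- derivative of the trajectory
    have hfps : fp s = q s - p s := by
      rw [hfp, Set.indicator_of_mem (show s ∈ Ici (0:ℝ) from hs0)]
    have hfms : fm s = ν s - μ s := by
      rw [hfm, Set.indicator_of_mem (show s ∈ Ici (0:ℝ) from hs0)]
    have hZPd : HasDerivAt (fun τ => (Pp τ, Pm τ)) ((q s - p s : Fin K → ℝ), (ν s - μ s : X → ℝ)) s := by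
      rw [← hfps, ← hfms]
      exact hPps.prodMk hPms
    -- near s facts
    have hnear : ∀ᶠ τ in 𝓝 s, τ ∈ Ioo (0:ℝ) T :=
      eventually_of_mem (isOpen_Ioo.mem_nhds hsIoo) (fun τ hτ => hτ)
    have hPps_eq : Pp s = p s := (hPp_eq s hs0).symm
    have hPms_eq : Pm s = μ s := (hPm_eq s hs0).symm
    -- second derivative at the current point
    set D2z := fderiv ℝ D1 (p s, μ s) with hD2zdef
    have hD1Zd : HasDerivAt (fun τ => D1 (Pp τ, Pm τ))
        (D2z ((q s - p s : Fin K → ℝ), (ν s - μ s : X → ℝ))) s := by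
      have hfd : HasFDerivAt D1 D2z (Pp s, Pm s) := by
        rw [hPps_eq, hPms_eq]
        exact (hD1diff _ hzU).hasFDerivAt
      exact hfd.comp_hasDerivAt s hZPd
    -- ===== envelope argument for A =====
    set ΦA : ℝ → ℝ := fun τ => D1 (Pp τ, Pm τ) ((q s - Pp τ : Fin K → ℝ), (0 : X → ℝ)) with hΦAdef
    have hΦAd : HasDerivAt ΦA
        (D2z ((q s - p s : Fin K → ℝ), (ν s - μ s : X → ℝ)) ((q s - p s : Fin K → ℝ), (0 : X → ℝ))
          - D1 (p s, μ s) ((q s - p s : Fin K → ℝ), (0 : X → ℝ))) s := by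
      have hu1 : HasDerivAt (fun τ => (q s - Pp τ : Fin K → ℝ)) (-(q s - p s)) s := by
        have := hPps.const_sub (q s)
        rwa [hfps] at this
      have hu : HasDerivAt (fun τ => ((q s - Pp τ : Fin K → ℝ), (0 : X → ℝ)))
          ((-(q s - p s) : Fin K → ℝ), (0 : X → ℝ)) s := hu1.prodMk (hasDerivAt_const s (0 : X → ℝ))
      have hcomb := hD1Zd.clm_apply hu
      have he1 : ((q s - Pp s : Fin K → ℝ), (0 : X → ℝ))
          = ((q s - p s : Fin K → ℝ), (0 : X → ℝ)) := by rw [hPps_eq]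
      have he2 : D1 (Pp s, Pm s) = D1 (p s, μ s) := by rw [hPps_eq, hPms_eq]
      rw [he1, he2] at hcomb
      have he3 : D1 (p s, μ s) ((-(q s - p s) : Fin K → ℝ), (0 : X → ℝ))
          = -(D1 (p s, μ s) ((q s - p s : Fin K → ℝ), (0 : X → ℝ))) := by
        have hv : ((-(q s - p s) : Fin K → ℝ), (0 : X → ℝ))
            = -(((q s - p s : Fin K → ℝ), (0 : X → ℝ))) := by
          rw [Prod.neg_mk, neg_zero]
        rw [hv, map_neg]
      rw [he3] at hcomb
      rw [sub_eq_add_neg]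
      exact hcomb
    have hΦA_le : ∀ᶠ τ in 𝓝 s, ΦA τ ≤ A τ := by
      filter_upwards [hnear] with τ hτ
      have hτ0 : (0:ℝ) ≤ τ := le_of_lt hτ.1
      have heval : ΦA τ = ∑ i, (q s i - p τ i) * gradp (p τ) (μ τ) i := by
        rw [hΦAdef]
        simp only
        rw [← hPp_eq τ hτ0, ← hPm_eq τ hτ0]
        exact (hAeval τ hτ0 (q s)).symm
      rw [heval, hA]
      exact aux_le_sup hqΔ
    have hΦA_s_eval : ΦA s = ∑ i, (q s i - p s i) * gradp (p s) (μ s) i := by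
      rw [hΦAdef]
      simp only
      rw [hPps_eq, hPms_eq]
      exact (hAeval s hs0 (q s)).symm
    have hΦA_s : ΦA s = A s := by
      have hle : ΦA s ≤ A s := by
        rw [hΦA_s_eval, hA]
        exact aux_le_sup hqΔ
      have hge : A s ≤ ΦA s := by
        rw [hΦA_s_eval, hA]
        apply aux_sup_le
        intro q' hq'
        rw [aux_sum_sub, aux_sum_sub]
        have := hqmax q' hq'
        linarith
      linarith
    have hAd : HasDerivAt A (deriv AE s) s := by
      have hAeq : A =ᶠ[𝓝 s] AE := by
        filter_upwards [hnear] with τ hτ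
        have : cl τ = τ := hcl_id τ ⟨le_of_lt hτ.1, le_of_lt hτ.2⟩
        show A τ = A (cl τ)
        rw [this]
      exact hAEs.hasDerivAt.congr_of_eventuallyEq hAeq
    have hdA_eq : deriv AE s
        = D2z ((q s - p s : Fin K → ℝ), (ν s - μ s : X → ℝ)) ((q s - p s : Fin K → ℝ), (0 : X → ℝ))
          - D1 (p s, μ s) ((q s - p s : Fin K → ℝ), (0 : X → ℝ)) := by
      have hmin : IsLocalMin (fun τ => A τ - ΦA τ) s := by
        have hev : ∀ᶠ τ in 𝓝 s, (fun τ => A τ - ΦA τ) s ≤ (fun τ => A τ - ΦA τ) τ := by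
          filter_upwards [hΦA_le] with τ hτ
          show A s - ΦA s ≤ A τ - ΦA τ
          rw [hΦA_s]
          simp only [sub_self]
          linarith
        exact hev
      have := hmin.hasDerivAt_eq_zero (hAd.sub hΦAd)
      linarith [this.le, this.ge]
    -- ===== envelope argument for B =====
    set ΨB : ℝ → ℝ := fun τ => D1 (Pp τ, Pm τ) ((0 : Fin K → ℝ), (ν s - Pm τ : X → ℝ)) with hΨBdef
    have hΨBd : HasDerivAt ΨB
        (D2z ((q s - p s : Fin K → ℝ), (ν s - μ s : X → ℝ)) ((0 : Fin K → ℝ), (ν s - μ s : X → ℝ))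
          - D1 (p s, μ s) ((0 : Fin K → ℝ), (ν s - μ s : X → ℝ))) s := by
      have hu1 : HasDerivAt (fun τ => (ν s - Pm τ : X → ℝ)) (-(ν s - μ s)) s := by
        have := hPms.const_sub (ν s)
        rwa [hfms] at this
      have hu : HasDerivAt (fun τ => ((0 : Fin K → ℝ), (ν s - Pm τ : X → ℝ)))
          ((0 : Fin K → ℝ), (-(ν s - μ s) : X → ℝ)) s := (hasDerivAt_const s (0 : Fin K → ℝ)).prodMk hu1
      have hcomb := hD1Zd.clm_apply hu
      have he1 : ((0 : Fin K → ℝ), (ν s - Pm s : X → ℝ))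
          = ((0 : Fin K → ℝ), (ν s - μ s : X → ℝ)) := by rw [hPms_eq]
      have he2 : D1 (Pp s, Pm s) = D1 (p s, μ s) := by rw [hPps_eq, hPms_eq]
      rw [he1, he2] at hcomb
      have he3 : D1 (p s, μ s) ((0 : Fin K → ℝ), (-(ν s - μ s) : X → ℝ))
          = -(D1 (p s, μ s) ((0 : Fin K → ℝ), (ν s - μ s : X → ℝ))) := by
        have hv : ((0 : Fin K → ℝ), (-(ν s - μ s) : X → ℝ))
            = -(((0 : Fin K → ℝ), (ν s - μ s : X → ℝ))) := by
          rw [Prod.neg_mk, neg_zero]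
        rw [hv, map_neg]
      rw [he3] at hcomb
      rw [sub_eq_add_neg]
      exact hcomb
    have hΨB_ge : ∀ᶠ τ in 𝓝 s, B τ ≤ ΨB τ := by
      filter_upwards [hnear] with τ hτ
      have hτ0 : (0:ℝ) ≤ τ := le_of_lt hτ.1
      have heval : ΨB τ = ∑ x, (ν s x - μ τ x) * gradm (p τ) (μ τ) x := by
        rw [hΨBdef]
        simp only
        rw [← hPp_eq τ hτ0, ← hPm_eq τ hτ0]
        exact (hBeval τ hτ0 (ν s)).symm
      rw [heval, hB]
      exact aux_inf_le hνΔ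
    have hΨB_s_eval : ΨB s = ∑ x, (ν s x - μ s x) * gradm (p s) (μ s) x := by
      rw [hΨBdef]
      simp only
      rw [hPps_eq, hPms_eq]
      exact (hBeval s hs0 (ν s)).symm
    have hΨB_s : ΨB s = B s := by
      have hge : B s ≤ ΨB s := by
        rw [hΨB_s_eval, hB]
        exact aux_inf_le hνΔ
      have hle : ΨB s ≤ B s := by
        rw [hΨB_s_eval, hB]
        apply aux_le_inf
        intro ν' hν'
        rw [aux_sum_sub, aux_sum_sub]
        have := hνmin ν' hν'
        linarith
      linarith
    have hBd : HasDerivAt B (deriv BE s) s := by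
      have hBeq : B =ᶠ[𝓝 s] BE := by
        filter_upwards [hnear] with τ hτ
        have : cl τ = τ := hcl_id τ ⟨le_of_lt hτ.1, le_of_lt hτ.2⟩
        show B τ = B (cl τ)
        rw [this]
      exact hBEs.hasDerivAt.congr_of_eventuallyEq hBeq
    have hdB_eq : deriv BE s
        = D2z ((q s - p s : Fin K → ℝ), (ν s - μ s : X → ℝ)) ((0 : Fin K → ℝ), (ν s - μ s : X → ℝ))
          - D1 (p s, μ s) ((0 : Fin K → ℝ), (ν s - μ s : X → ℝ)) := by
      have hmin : IsLocalMin (fun τ => ΨB τ - B τ) s := by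
        have hev : ∀ᶠ τ in 𝓝 s, (fun τ => ΨB τ - B τ) s ≤ (fun τ => ΨB τ - B τ) τ := by
          filter_upwards [hΨB_ge] with τ hτ
          show ΨB s - B s ≤ ΨB τ - B τ
          rw [hΨB_s]
          simp only [sub_self]
          linarith
        exact hev
      have := hmin.hasDerivAt_eq_zero (hΨBd.sub hBd)
      linarith [this.le, this.ge]
    -- ===== symmetry of the second derivative =====
    have hsym : ∀ u v : (Fin K → ℝ) × (X → ℝ), D2z u v = D2z v u := by
      have hs2 := (hF.contDiffAt (hU.mem_nhds hzU)).isSymmSndFDerivAt (by simp [minSmoothness_of_isRCLikeNormedField])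
      exact fun u v => hs2 u v
    -- ===== sign conditions =====
    have hsign : ∀ (va : (Fin K → ℝ) × (X → ℝ)),
        (∀ u ∈ Ioc (0:ℝ) (1/2), Fu ((p s, μ s) + (0:ℝ) • va) + Fu ((p s, μ s) + (2*u) • va)
          ≤ 2 * Fu ((p s, μ s) + u • va)) → D2z va va ≤ 0 := by
      intro va hmid
      obtain ⟨ε1, hε1pos, hball⟩ := Metric.isOpen_iff.1 hU _ hzU
      have hε0pos : (0:ℝ) < ε1 / (‖va‖ + 1) := by positivity
      have hline : ∀ u : ℝ, HasDerivAt (fun u : ℝ => (p s, μ s) + u • va) va u := by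
        intro u
        have h1 : HasDerivAt (fun u : ℝ => u • va) ((1:ℝ) • va) u := (hasDerivAt_id u).smul_const va
        rw [one_smul] at h1
        exact h1.const_add _
      have hmemU : ∀ u ∈ Ioo (-(ε1 / (‖va‖ + 1))) (ε1 / (‖va‖ + 1)), (p s, μ s) + u • va ∈ U := by
        intro u hu
        apply hball
        rw [mem_ball_iff_norm, add_sub_cancel_left, norm_smul]
        have habs : |u| < ε1 / (‖va‖ + 1) := abs_lt.2 ⟨hu.1, hu.2⟩
        have hva1 : (0:ℝ) < ‖va‖ + 1 := by positivity
        calc ‖u‖ * ‖va‖ ≤ ‖u‖ * (‖va‖ + 1) := by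
              apply mul_le_mul_of_nonneg_left (by linarith) (norm_nonneg u)
          _ < (ε1 / (‖va‖ + 1)) * (‖va‖ + 1) := by
              apply mul_lt_mul_of_pos_right _ hva1
              exact habs
          _ = ε1 := by field_simp
      have hder : ∀ u ∈ Ioo (-(ε1 / (‖va‖ + 1))) (ε1 / (‖va‖ + 1)),
          HasDerivAt (fun w : ℝ => Fu ((p s, μ s) + w • va)) (D1 ((p s, μ s) + u • va) va) u := by
        intro u hu
        exact (hFdiff _ (hmemU u hu)).hasFDerivAt.comp_hasDerivAt u (hline u)
      have h2d : HasDerivAt (fun u : ℝ => D1 ((p s, μ s) + u • va) va) (D2z va va) 0 := by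
        have hfd : HasFDerivAt D1 D2z ((p s, μ s) + (0:ℝ) • va) := by
          rw [zero_smul, add_zero]
          exact (hD1diff _ hzU).hasFDerivAt
        have hc : HasDerivAt (fun u : ℝ => D1 ((p s, μ s) + u • va)) (D2z va) 0 :=
          hfd.comp_hasDerivAt 0 (hline 0)
        have := hc.clm_apply (hasDerivAt_const 0 va)
        simpa using this
      apply aux_concave_snd_le hε0pos hder h2d
      intro u hu
      have := hmid u hu
      calc (fun w : ℝ => Fu ((p s, μ s) + w • va)) 0 + (fun w : ℝ => Fu ((p s, μ s) + w • va)) (2*u)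
          = Fu ((p s, μ s) + (0:ℝ) • va) + Fu ((p s, μ s) + (2*u) • va) := rfl
        _ ≤ 2 * Fu ((p s, μ s) + u • va) := this
    have hsignneg : ∀ (vb : (Fin K → ℝ) × (X → ℝ)),
        (∀ u ∈ Ioc (0:ℝ) (1/2), 2 * Fu ((p s, μ s) + u • vb)
          ≤ Fu ((p s, μ s) + (0:ℝ) • vb) + Fu ((p s, μ s) + (2*u) • vb)) → 0 ≤ D2z vb vb := by
      intro vb hmid
      obtain ⟨ε1, hε1pos, hball⟩ := Metric.isOpen_iff.1 hU _ hzU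
      have hε0pos : (0:ℝ) < ε1 / (‖vb‖ + 1) := by positivity
      have hline : ∀ u : ℝ, HasDerivAt (fun u : ℝ => (p s, μ s) + u • vb) vb u := by
        intro u
        have h1 : HasDerivAt (fun u : ℝ => u • vb) ((1:ℝ) • vb) u := (hasDerivAt_id u).smul_const vb
        rw [one_smul] at h1
        exact h1.const_add _
      have hmemU : ∀ u ∈ Ioo (-(ε1 / (‖vb‖ + 1))) (ε1 / (‖vb‖ + 1)), (p s, μ s) + u • vb ∈ U := by
        intro u hu
        apply hball
        rw [mem_ball_iff_norm, add_sub_cancel_left, norm_smul]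
        have habs : |u| < ε1 / (‖vb‖ + 1) := abs_lt.2 ⟨hu.1, hu.2⟩
        have hvb1 : (0:ℝ) < ‖vb‖ + 1 := by positivity
        calc ‖u‖ * ‖vb‖ ≤ ‖u‖ * (‖vb‖ + 1) := by
              apply mul_le_mul_of_nonneg_left (by linarith) (norm_nonneg u)
          _ < (ε1 / (‖vb‖ + 1)) * (‖vb‖ + 1) := by
              apply mul_lt_mul_of_pos_right _ hvb1
              exact habs
          _ = ε1 := by field_simp
      have hder : ∀ u ∈ Ioo (-(ε1 / (‖vb‖ + 1))) (ε1 / (‖vb‖ + 1)),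
          HasDerivAt (fun w : ℝ => -(Fu ((p s, μ s) + w • vb))) (-(D1 ((p s, μ s) + u • vb) vb)) u := by
        intro u hu
        exact ((hFdiff _ (hmemU u hu)).hasFDerivAt.comp_hasDerivAt u (hline u)).neg
      have h2d : HasDerivAt (fun u : ℝ => -(D1 ((p s, μ s) + u • vb) vb)) (-(D2z vb vb)) 0 := by
        have hfd : HasFDerivAt D1 D2z ((p s, μ s) + (0:ℝ) • vb) := by
          rw [zero_smul, add_zero]
          exact (hD1diff _ hzU).hasFDerivAt
        have hc : HasDerivAt (fun u : ℝ => D1 ((p s, μ s) + u • vb)) (D2z vb) 0 :=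
          hfd.comp_hasDerivAt 0 (hline 0)
        have := (hc.clm_apply (hasDerivAt_const 0 vb)).neg
        exact this.congr_deriv (by simp)
      have := aux_concave_snd_le hε0pos hder h2d (by
        intro u hu
        have hm := hmid u hu
        show -(Fu ((p s, μ s) + (0:ℝ) • vb)) + -(Fu ((p s, μ s) + (2*u) • vb))
          ≤ 2 * -(Fu ((p s, μ s) + u • vb))
        linarith)
      linarith
    have hsign1 : D2z ((q s - p s : Fin K → ℝ), (0 : X → ℝ)) ((q s - p s : Fin K → ℝ), (0 : X → ℝ)) ≤ 0 := by
      apply hsign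
      intro u hu
      have heval : ∀ w : ℝ, Fu ((p s, μ s) + w • ((q s - p s : Fin K → ℝ), (0 : X → ℝ)))
          = F (p s + w • (q s - p s)) (μ s) := by
        intro w
        show F ((p s, μ s) + w • ((q s - p s : Fin K → ℝ), (0 : X → ℝ))).1
          (((p s, μ s) + w • ((q s - p s : Fin K → ℝ), (0 : X → ℝ))).2) = _
        rw [Prod.smul_mk, Prod.mk_add_mk, smul_zero, add_zero]
      rw [heval 0, heval (2*u), heval u]
      have hymem : p s + (2*u) • (q s - p s) ∈ stdSimplex ℝ (Fin K) := by
        have hmem2 := (convex_stdSimplex ℝ (Fin K)) (hmem s hs0).1 hqΔ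
          (by linarith [hu.2] : (0:ℝ) ≤ 1 - 2*u) (by linarith [hu.1] : (0:ℝ) ≤ 2*u) (by ring)
        convert hmem2 using 1
        module
      have hmidp := (hconc (μ s) (hmem s hs0).2.1).2 (hmem s hs0).1 hymem
        (by norm_num : (0:ℝ) ≤ 1/2) (by norm_num : (0:ℝ) ≤ 1/2) (by norm_num)
      have hmideq : (1/2 : ℝ) • (p s) + (1/2 : ℝ) • (p s + (2*u) • (q s - p s))
          = p s + u • (q s - p s) := by module
      rw [hmideq] at hmidp
      simp only [smul_eq_mul] at hmidp
      rw [zero_smul, add_zero]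
      linarith
    have hsign2 : 0 ≤ D2z ((0 : Fin K → ℝ), (ν s - μ s : X → ℝ)) ((0 : Fin K → ℝ), (ν s - μ s : X → ℝ)) := by
      apply hsignneg
      intro u hu
      have heval : ∀ w : ℝ, Fu ((p s, μ s) + w • ((0 : Fin K → ℝ), (ν s - μ s : X → ℝ)))
          = F (p s) (μ s + w • (ν s - μ s)) := by
        intro w
        show F ((p s, μ s) + w • ((0 : Fin K → ℝ), (ν s - μ s : X → ℝ))).1
          (((p s, μ s) + w • ((0 : Fin K → ℝ), (ν s - μ s : X → ℝ))).2) = _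
        rw [Prod.smul_mk, Prod.mk_add_mk, smul_zero, add_zero]
      rw [heval 0, heval (2*u), heval u]
      have hymem : μ s + (2*u) • (ν s - μ s) ∈ stdSimplex ℝ X := by
        have hmem2 := (convex_stdSimplex ℝ X) (hmem s hs0).2.1 hνΔ
          (by linarith [hu.2] : (0:ℝ) ≤ 1 - 2*u) (by linarith [hu.1] : (0:ℝ) ≤ 2*u) (by ring)
        convert hmem2 using 1
        module
      have hmidp := (hconv (p s) (hmem s hs0).1).2 (hmem s hs0).2.1 hymem
        (by norm_num : (0:ℝ) ≤ 1/2) (by norm_num : (0:ℝ) ≤ 1/2) (by norm_num)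
      have hmideq : (1/2 : ℝ) • (μ s) + (1/2 : ℝ) • (μ s + (2*u) • (ν s - μ s))
          = μ s + u • (ν s - μ s) := by module
      rw [hmideq] at hmidp
      simp only [smul_eq_mul] at hmidp
      rw [zero_smul, add_zero]
      linarith
    -- ===== assemble the derivative of h =====
    have hderivh : HasDerivAt h
        (Real.exp s * (A s - B s) + Real.exp s * (deriv AE s - deriv BE s)) s := by
      have hprod : HasDerivAt (fun τ => Real.exp τ * (A τ - B τ))
          (Real.exp s * (A s - B s) + Real.exp s * (deriv AE s - deriv BE s)) s :=
        (Real.hasDerivAt_exp s).mul (hAd.sub hBd)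
      apply hprod.congr_of_eventuallyEq
      filter_upwards [hnear] with τ hτ
      show h τ = Real.exp τ * (A τ - B τ)
      have hclτ : cl τ = τ := hcl_id τ ⟨le_of_lt hτ.1, le_of_lt hτ.2⟩
      have hminτ : min τ T = τ := min_eq_left (le_of_lt hτ.2)
      show Real.exp (min τ T) * (AE τ - BE τ) = Real.exp τ * (A τ - B τ)
      rw [hminτ]
      show Real.exp τ * (A (cl τ) - B (cl τ)) = Real.exp τ * (A τ - B τ)
      rw [hclτ]
    rw [hderivh.deriv]
    -- ===== final inequality =====
    have hAs_val : A s = D1 (p s, μ s) ((q s - p s : Fin K → ℝ), (0 : X → ℝ)) := by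
      rw [← hΦA_s, hΦA_s_eval]
      exact hAeval s hs0 (q s)
    have hBs_val : B s = D1 (p s, μ s) ((0 : Fin K → ℝ), (ν s - μ s : X → ℝ)) := by
      rw [← hΨB_s, hΨB_s_eval]
      exact hBeval s hs0 (ν s)
    have hwsum : ((q s - p s : Fin K → ℝ), (ν s - μ s : X → ℝ))
        = ((q s - p s : Fin K → ℝ), (0 : X → ℝ)) + ((0 : Fin K → ℝ), (ν s - μ s : X → ℝ)) := by
      rw [Prod.mk_add_mk, add_zero, zero_add]
    have hexpand : deriv AE s - deriv BE s
        = D2z ((q s - p s : Fin K → ℝ), (0 : X → ℝ)) ((q s - p s : Fin K → ℝ), (0 : X → ℝ))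
          - D2z ((0 : Fin K → ℝ), (ν s - μ s : X → ℝ)) ((0 : Fin K → ℝ), (ν s - μ s : X → ℝ))
          - (A s - B s) := by
      rw [hdA_eq, hdB_eq, hAs_val, hBs_val, hwsum, map_add]
      rw [ContinuousLinearMap.add_apply, ContinuousLinearMap.add_apply]
      rw [hsym ((0 : Fin K → ℝ), (ν s - μ s : X → ℝ)) ((q s - p s : Fin K → ℝ), (0 : X → ℝ))]
      ring
    rw [hexpand]
    have hexps := Real.exp_pos s
    have hquad : D2z ((q s - p s : Fin K → ℝ), (0 : X → ℝ)) ((q s - p s : Fin K → ℝ), (0 : X → ℝ))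
        - D2z ((0 : Fin K → ℝ), (ν s - μ s : X → ℝ)) ((0 : Fin K → ℝ), (ν s - μ s : X → ℝ)) ≤ 0 := by
      linarith
    nlinarith [hexps, hquad]
  -- apply the decay lemma
  have hfinal := aux_lip_mono hh_lip (le_of_lt hTpos) hcrux
  -- unfold h at 0 and T
  have hhT : h T = Real.exp T * (A T - B T) := by
    simp only [hh, hAE, hBE, min_self, hcl_id T ⟨hT, le_refl T⟩]
  have hh0 : h 0 = A 0 - B 0 := by
    simp only [hh, hAE, hBE, min_eq_left hT, hcl_id 0 ⟨le_refl (0:ℝ), hT⟩, Real.exp_zero, one_mul]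
  rw [hhT, hh0] at hfinal
  rw [hVAB T, hVAB 0, Real.exp_neg]
  have h2 : A T - B T = (Real.exp T * (A T - B T)) * (Real.exp T)⁻¹ := by
    field_simp
  rw [h2]
  exact mul_le_mul_of_nonneg_right hfinal (by positivity)
end

section
/- In Gaussian BAI, for each x ∈ X the function D(·,x) is differentiable on int Δ_K, and for every p ∈ Δ_K every element g of the limiting-gradient hull ∂°D(·,x)(p) satisfies: g_k = 0 for all k ∉ {I*, x}; 0 ≤ g_{I*} ≤ c_x and 0 ≤ g_x ≤ c_x where c_x = (θ_{I*} − θ_x)²/(2σ²); and max{g_{I*}, g_x} ≥ c_x/4. -/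
open Filter

/-- The relative interior of the standard simplex. -/
def simplexInterior (K : ℕ) : Set (Fin K → ℝ) :=
  {p | p ∈ stdSimplex ℝ (Fin K) ∧ ∀ i, 0 < p i}

/-- Gaussian best-arm-identification payoff:
`D(p,x) = ((θ_{I*} − θ_x)²/(2σ²)) · p_{I*} p_x / (p_{I*} + p_x)` when
`p_{I*} + p_x > 0`, and `0` otherwise. -/
noncomputable def Dg {K : ℕ} (θ : Fin K → ℝ) (σ : ℝ) (Istar : Fin K)
    (p : Fin K → ℝ) (x : Fin K) : ℝ :=
  if 0 < p Istar + p x then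
    ((θ Istar - θ x) ^ 2 / (2 * σ ^ 2)) * (p Istar * p x / (p Istar + p x))
  else 0

/-- The gradient vector of `D(·,x)` obtained from the Fréchet derivative. -/
noncomputable def gradDg {K : ℕ} (θ : Fin K → ℝ) (σ : ℝ) (Istar : Fin K)
    (x : Fin K) (p : Fin K → ℝ) : Fin K → ℝ :=
  fun i => fderiv ℝ (fun p' => Dg θ σ Istar p' x) p (Pi.single i 1)

/-- The limiting-gradient hull (Clarke generalized gradient) of `D(·,x)` at `p`. -/
noncomputable def clarkeDg {K : ℕ} (θ : Fin K → ℝ) (σ : ℝ) (Istar : Fin K)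
    (x : Fin K) (p : Fin K → ℝ) : Set (Fin K → ℝ) :=
  convexHull ℝ {g : Fin K → ℝ | ∃ pn : ℕ → (Fin K → ℝ),
    (∀ n, pn n ∈ simplexInterior K) ∧
    Tendsto pn atTop (nhds p) ∧
    Tendsto (fun n => gradDg θ σ Istar x (pn n)) atTop (nhds g)}

lemma dg_diff {K : ℕ} (θ : Fin K → ℝ) (σ : ℝ) (Istar x : Fin K) (p : Fin K → ℝ)
    (hs : 0 < p Istar + p x) :
    DifferentiableAt ℝ (fun p' => Dg θ σ Istar p' x) p := by
  have hopen : IsOpen {q : Fin K → ℝ | 0 < q Istar + q x} :=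
    isOpen_lt continuous_const ((continuous_apply Istar).add (continuous_apply x))
  have heq : (fun p' => Dg θ σ Istar p' x) =ᶠ[nhds p]
      fun p' => ((θ Istar - θ x) ^ 2 / (2 * σ ^ 2)) * (p' Istar * p' x * (p' Istar + p' x)⁻¹) := by
    filter_upwards [hopen.mem_nhds hs] with q hq
    simp [Dg, if_pos hq, div_eq_mul_inv]
  rw [heq.differentiableAt_iff]
  have h1 : DifferentiableAt ℝ (fun p' : Fin K → ℝ => p' Istar) p :=
    (ContinuousLinearMap.proj Istar : (Fin K → ℝ) →L[ℝ] ℝ).differentiableAt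
  have h2 : DifferentiableAt ℝ (fun p' : Fin K → ℝ => p' x) p :=
    (ContinuousLinearMap.proj x : (Fin K → ℝ) →L[ℝ] ℝ).differentiableAt
  exact (differentiableAt_const _).mul ((h1.mul h2).mul ((h1.add h2).inv (ne_of_gt hs)))

lemma dg_line {K : ℕ} (θ : Fin K → ℝ) (σ : ℝ) (Istar x : Fin K) (p : Fin K → ℝ)
    (hs : 0 < p Istar + p x) (i : Fin K) :
    HasDerivAt (fun t : ℝ => Dg θ σ Istar (p + t • (Pi.single i 1 : Fin K → ℝ)) x)
      (gradDg θ σ Istar x p i) 0 := by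
  have hF : HasFDerivAt (fun p' => Dg θ σ Istar p' x)
      (fderiv ℝ (fun p' => Dg θ σ Istar p' x) p) p :=
    (dg_diff θ σ Istar x p hs).hasFDerivAt
  have hline : HasDerivAt (fun t : ℝ => p + t • (Pi.single i 1 : Fin K → ℝ)) (Pi.single i 1) 0 := by
    simpa using ((hasDerivAt_id (0:ℝ)).smul_const ((Pi.single i 1 : Fin K → ℝ))).const_add p
  have := hF.comp_hasDerivAt_of_eq 0 hline (by simp)
  simpa [Function.comp_def, gradDg] using this

lemma dg_grad_other {K : ℕ} (θ : Fin K → ℝ) (σ : ℝ) (Istar x : Fin K) (p : Fin K → ℝ)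
    (hs : 0 < p Istar + p x) (k : Fin K) (hkI : k ≠ Istar) (hkx : k ≠ x) :
    gradDg θ σ Istar x p k = 0 := by
  have h := dg_line θ σ Istar x p hs k
  have hconst : (fun t : ℝ => Dg θ σ Istar (p + t • (Pi.single k 1 : Fin K → ℝ)) x)
      = fun _ => Dg θ σ Istar p x := by
    funext t
    have e1 : (p + t • (Pi.single k 1 : Fin K → ℝ)) Istar = p Istar := by
      simp [Pi.single_eq_of_ne (Ne.symm hkI)]
    have e2 : (p + t • (Pi.single k 1 : Fin K → ℝ)) x = p x := by
      simp [Pi.single_eq_of_ne (Ne.symm hkx)]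
    simp only [Dg, e1, e2]
  rw [hconst] at h
  exact h.unique (hasDerivAt_const 0 _)

lemma dg_grad_Istar {K : ℕ} (θ : Fin K → ℝ) (σ : ℝ) (Istar x : Fin K) (hxI : x ≠ Istar)
    (p : Fin K → ℝ) (hs : 0 < p Istar + p x) :
    gradDg θ σ Istar x p Istar
      = ((θ Istar - θ x) ^ 2 / (2 * σ ^ 2)) * ((p x) ^ 2 / (p Istar + p x) ^ 2) := by
  have h := dg_line θ σ Istar x p hs Istar
  set c := (θ Istar - θ x) ^ 2 / (2 * σ ^ 2) with hc
  set u := p Istar with hu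
  set v := p x with hv
  have hnum : HasDerivAt (fun t : ℝ => (u + t) * v) (1 * v) 0 :=
    ((hasDerivAt_id 0).const_add u).mul_const v
  have hden : HasDerivAt (fun t : ℝ => (u + v) + t) 1 0 := (hasDerivAt_id 0).const_add (u + v)
  have hne : (u + v) + (0:ℝ) ≠ 0 := by simpa using ne_of_gt hs
  have hg := (hnum.div hden hne).const_mul c
  have hev : (fun t : ℝ => Dg θ σ Istar (p + t • (Pi.single Istar 1 : Fin K → ℝ)) x)
      =ᶠ[nhds (0:ℝ)] (fun t : ℝ => c * ((u + t) * v / ((u + v) + t))) := by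
    have hopen : IsOpen {t : ℝ | 0 < (u + v) + t} :=
      isOpen_lt continuous_const (continuous_const.add continuous_id)
    have h0 : (0:ℝ) ∈ {t : ℝ | 0 < (u + v) + t} := by simpa using hs
    filter_upwards [hopen.mem_nhds h0] with t ht
    have e1 : (p + t • (Pi.single Istar 1 : Fin K → ℝ)) Istar = u + t := by simp [hu]
    have e2 : (p + t • (Pi.single Istar 1 : Fin K → ℝ)) x = v := by
      simp [Pi.single_eq_of_ne hxI, hv]
    have hpos : 0 < (u + t) + v := by
      have : (0:ℝ) < (u + v) + t := ht
      linarith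
    simp only [Dg, e1, e2, if_pos hpos]
    rw [← hc]
    ring
  have hg' := hg.congr_of_eventuallyEq hev
  have huniq := h.unique hg'
  rw [huniq]
  ring

lemma dg_grad_x {K : ℕ} (θ : Fin K → ℝ) (σ : ℝ) (Istar x : Fin K) (hxI : x ≠ Istar)
    (p : Fin K → ℝ) (hs : 0 < p Istar + p x) :
    gradDg θ σ Istar x p x
      = ((θ Istar - θ x) ^ 2 / (2 * σ ^ 2)) * ((p Istar) ^ 2 / (p Istar + p x) ^ 2) := by
  have h := dg_line θ σ Istar x p hs x
  set c := (θ Istar - θ x) ^ 2 / (2 * σ ^ 2) with hc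
  set u := p Istar with hu
  set v := p x with hv
  have hnum : HasDerivAt (fun t : ℝ => u * (v + t)) (u * 1) 0 :=
    ((hasDerivAt_id 0).const_add v).const_mul u
  have hden : HasDerivAt (fun t : ℝ => (u + v) + t) 1 0 := (hasDerivAt_id 0).const_add (u + v)
  have hne : (u + v) + (0:ℝ) ≠ 0 := by simpa using ne_of_gt hs
  have hg := (hnum.div hden hne).const_mul c
  have hev : (fun t : ℝ => Dg θ σ Istar (p + t • (Pi.single x 1 : Fin K → ℝ)) x)
      =ᶠ[nhds (0:ℝ)] (fun t : ℝ => c * (u * (v + t) / ((u + v) + t))) := by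
    have hopen : IsOpen {t : ℝ | 0 < (u + v) + t} :=
      isOpen_lt continuous_const (continuous_const.add continuous_id)
    have h0 : (0:ℝ) ∈ {t : ℝ | 0 < (u + v) + t} := by simpa using hs
    filter_upwards [hopen.mem_nhds h0] with t ht
    have e1 : (p + t • (Pi.single x 1 : Fin K → ℝ)) Istar = u := by
      simp [Pi.single_eq_of_ne (Ne.symm hxI), hu]
    have e2 : (p + t • (Pi.single x 1 : Fin K → ℝ)) x = v + t := by simp [hv]
    have hpos : 0 < u + (v + t) := by
      have : (0:ℝ) < (u + v) + t := ht
      linarith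
    simp only [Dg, e1, e2, if_pos hpos]
    rw [← hc]
    ring
  have hg' := hg.congr_of_eventuallyEq hev
  have huniq := h.unique hg'
  rw [huniq]
  ring

lemma grad_bounds {K : ℕ} (θ : Fin K → ℝ) (σ : ℝ) (hσ : 0 < σ) (Istar x : Fin K)
    (hxI : x ≠ Istar) (p : Fin K → ℝ) (hu : 0 < p Istar) (hv : 0 < p x) :
    0 ≤ gradDg θ σ Istar x p Istar ∧
    gradDg θ σ Istar x p Istar ≤ (θ Istar - θ x) ^ 2 / (2 * σ ^ 2) ∧
    0 ≤ gradDg θ σ Istar x p x ∧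
    gradDg θ σ Istar x p x ≤ (θ Istar - θ x) ^ 2 / (2 * σ ^ 2) ∧
    ((θ Istar - θ x) ^ 2 / (2 * σ ^ 2)) / 2
      ≤ gradDg θ σ Istar x p Istar + gradDg θ σ Istar x p x := by
  have hs : 0 < p Istar + p x := by linarith
  rw [dg_grad_Istar θ σ Istar x hxI p hs, dg_grad_x θ σ Istar x hxI p hs]
  set c := (θ Istar - θ x) ^ 2 / (2 * σ ^ 2) with hc
  set u := p Istar with hud
  set v := p x with hvd
  have hc0 : 0 ≤ c := by rw [hc]; positivity
  have hs2 : 0 < (u + v) ^ 2 := by positivity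
  have hb1 : v ^ 2 / (u + v) ^ 2 ≤ 1 := (div_le_one hs2).mpr (by nlinarith)
  have hb2 : u ^ 2 / (u + v) ^ 2 ≤ 1 := (div_le_one hs2).mpr (by nlinarith)
  have hX : (1:ℝ) / 2 ≤ (v ^ 2 + u ^ 2) / (u + v) ^ 2 := by
    rw [le_div_iff₀ hs2]; nlinarith [sq_nonneg (u - v)]
  refine ⟨by positivity, mul_le_of_le_one_right hc0 hb1, by positivity,
    mul_le_of_le_one_right hc0 hb2, ?_⟩
  have hsum : c * (v ^ 2 / (u + v) ^ 2) + c * (u ^ 2 / (u + v) ^ 2)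
      = c * ((v ^ 2 + u ^ 2) / (u + v) ^ 2) := by ring
  rw [hsum]
  calc c / 2 = c * (1 / 2) := by ring
    _ ≤ c * ((v ^ 2 + u ^ 2) / (u + v) ^ 2) := mul_le_mul_of_nonneg_left hX hc0

/-- In Gaussian BAI, `D(·,x)` is differentiable on `int Δ_K`, and for every
`p ∈ Δ_K`, every `g` in the limiting-gradient hull `∂°D(·,x)(p)` satisfies: `g k = 0` for
`k ∉ {I*, x}`, `0 ≤ g_{I*} ≤ c_x`, `0 ≤ g_x ≤ c_x` with `c_x = (θ_{I*}−θ_x)²/(2σ²)`, and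
`max{g_{I*}, g_x} ≥ c_x/4`. -/
theorem stmt_9 {K : ℕ} (θ : Fin K → ℝ) (Istar : Fin K)
    (hmax : ∀ j ≠ Istar, θ j < θ Istar) (σ : ℝ) (hσ : 0 < σ)
    (x : Fin K) (hx : x ≠ Istar) :
    (∀ p ∈ simplexInterior K, DifferentiableAt ℝ (fun p' => Dg θ σ Istar p' x) p) ∧
    ∀ p ∈ stdSimplex ℝ (Fin K), ∀ g ∈ clarkeDg θ σ Istar x p,
      (∀ k, k ≠ Istar → k ≠ x → g k = 0) ∧
      (0 ≤ g Istar ∧ g Istar ≤ (θ Istar - θ x) ^ 2 / (2 * σ ^ 2)) ∧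
      (0 ≤ g x ∧ g x ≤ (θ Istar - θ x) ^ 2 / (2 * σ ^ 2)) ∧
      ((θ Istar - θ x) ^ 2 / (2 * σ ^ 2)) / 4 ≤ max (g Istar) (g x) := by
  set c := (θ Istar - θ x) ^ 2 / (2 * σ ^ 2) with hcdef
  constructor
  · intro p hp
    have h1 := hp.2 Istar
    have h2 := hp.2 x
    exact dg_diff θ σ Istar x p (by linarith)
  · intro p _ g hg
    set S : Set (Fin K → ℝ) := {g | (∀ k, k ≠ Istar → k ≠ x → g k = 0) ∧
      0 ≤ g Istar ∧ g Istar ≤ c ∧ 0 ≤ g x ∧ g x ≤ c ∧ c / 2 ≤ g Istar + g x} with hSdef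
    have hconv : Convex ℝ S := by
      intro g1 hg1 g2 hg2 a b ha hb hab
      obtain ⟨z1, i1, i2, i3, i4, i5⟩ := hg1
      obtain ⟨w1, j1, j2, j3, j4, j5⟩ := hg2
      refine ⟨fun k hk1 hk2 => ?_, ?_, ?_, ?_, ?_, ?_⟩ <;>
        simp only [Pi.add_apply, Pi.smul_apply, smul_eq_mul]
      · rw [z1 k hk1 hk2, w1 k hk1 hk2]; ring
      · nlinarith
      · nlinarith
      · nlinarith
      · nlinarith
      · nlinarith
    have hsub : {g0 : Fin K → ℝ | ∃ pn : ℕ → (Fin K → ℝ),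
        (∀ n, pn n ∈ simplexInterior K) ∧
        Tendsto pn atTop (nhds p) ∧
        Tendsto (fun n => gradDg θ σ Istar x (pn n)) atTop (nhds g0)} ⊆ S := by
      rintro g0 ⟨pn, hpn, -, hgrad⟩
      have hk : ∀ k, Tendsto (fun n => gradDg θ σ Istar x (pn n) k) atTop (nhds (g0 k)) :=
        fun k => tendsto_pi_nhds.mp hgrad k
      have hb := fun n => grad_bounds θ σ hσ Istar x hx (pn n)
        ((hpn n).2 Istar) ((hpn n).2 x)
      have hs := fun n : ℕ => (by
        have h1 := (hpn n).2 Istar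
        have h2 := (hpn n).2 x
        linarith : 0 < pn n Istar + pn n x)
      refine ⟨fun k hk1 hk2 => ?_, ?_, ?_, ?_, ?_, ?_⟩
      · have hzero : (fun n => gradDg θ σ Istar x (pn n) k) = fun _ => (0:ℝ) :=
          funext fun n => dg_grad_other θ σ Istar x (pn n) (hs n) k hk1 hk2
        have := hk k
        rw [hzero] at this
        exact tendsto_nhds_unique this tendsto_const_nhds
      · exact ge_of_tendsto' (hk Istar) fun n => (hb n).1
      · exact le_of_tendsto' (hk Istar) fun n => (hb n).2.1
      · exact ge_of_tendsto' (hk x) fun n => (hb n).2.2.1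
      · exact le_of_tendsto' (hk x) fun n => (hb n).2.2.2.1
      · exact ge_of_tendsto' ((hk Istar).add (hk x)) fun n => (hb n).2.2.2.2
    have hgS : g ∈ S := convexHull_min hsub hconv hg
    obtain ⟨z1, i1, i2, i3, i4, i5⟩ := hgS
    refine ⟨z1, ⟨i1, i2⟩, ⟨i3, i4⟩, ?_⟩
    have hm1 : g Istar ≤ max (g Istar) (g x) := le_max_left _ _
    have hm2 : g x ≤ max (g Istar) (g x) := le_max_right _ _
    linarith
end

section
/- In Gaussian BAI, set κ_x = (θ_{I*} − θ_x)²/(8σ²), κ_min = min_{x∈X} κ_x, M = max_{x∈X} (θ_{I*} − θ_x)²/(2σ²), and ε₀ = min{1/2, κ_min/(4KM)}. Let p ∈ Δ_K be such that Z = {x ∈ X : p_{I*} p_x = 0} is nonempty, and let μ ∈ Δ_X satisfy Σ_{x∉Z} μ_x ≤ ε₀. Then every vector of the form f = Σ_{x∈X} μ_x g^{(x)} with g^{(x)} ∈ ∂°D(·,x)(p) for each x satisfies max_{i : p_i = 0} f_i ≥ κ_min/(2K) and max_{i : p_i > 0} f_i ≤ ε₀ M ≤ κ_min/(4K); in particular,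 every maximizer of i ↦ f_i lies in {i : p_i = 0}. -/
open Filter

noncomputable def Gfun {K : ℕ} (θ : Fin K → ℝ) (σ : ℝ) (Istar x : Fin K)
    (q : Fin K → ℝ) : Fin K → ℝ :=
  fun i => ((θ Istar - θ x) ^ 2 / (2 * σ ^ 2)) *
    (if i = Istar then (q x / (q Istar + q x)) ^ 2
     else if i = x then (q Istar / (q Istar + q x)) ^ 2 else 0)

lemma myGrad {K : ℕ} (θ : Fin K → ℝ) (σ : ℝ) (Istar : Fin K) (x : Fin K)
    (hx : x ≠ Istar) (q : Fin K → ℝ) (hqI : 0 < q Istar) (hqx : 0 < q x) :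
    gradDg θ σ Istar x q = Gfun θ σ Istar x q := by
  unfold Gfun
  have hs : 0 < q Istar + q x := by linarith
  set c := (θ Istar - θ x) ^ 2 / (2 * σ ^ 2) with hc
  have hI := hasFDerivAt_apply (𝕜 := ℝ) (F' := fun _ : Fin K => ℝ) Istar q
  have hX := hasFDerivAt_apply (𝕜 := ℝ) (F' := fun _ : Fin K => ℝ) x q
  have hinv := (hasFDerivAt_inv' (𝕜 := ℝ) (R := ℝ) (ne_of_gt hs)).comp q (hI.add hX)
  have hF := ((hI.mul hX).mul hinv).const_mul c
  have heq : (fun p' => Dg θ σ Istar p' x) =ᶠ[nhds q]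
      (fun p' : Fin K → ℝ => c * (p' Istar * p' x * (Inv.inv ∘ fun p' : Fin K → ℝ => p' Istar + p' x) p')) := by
    have hopen : IsOpen {p' : Fin K → ℝ | 0 < p' Istar + p' x} :=
      isOpen_lt continuous_const ((continuous_apply Istar).add (continuous_apply x))
    filter_upwards [hopen.mem_nhds hs] with p' hp'
    simp only [Dg, if_pos hp', Function.comp_apply, div_eq_mul_inv, mul_assoc]
    rw [hc]
    ring
  have hD := hF.congr_of_eventuallyEq heq
  funext i
  rw [gradDg, hD.fderiv]
  simp only [ContinuousLinearMap.coe_smul', Pi.smul_apply, ContinuousLinearMap.add_apply,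
    ContinuousLinearMap.smul_apply, ContinuousLinearMap.comp_apply,
    ContinuousLinearMap.neg_apply, ContinuousLinearMap.mulLeftRight_apply,
    ContinuousLinearMap.proj_apply, Pi.single_apply, Function.comp_apply, smul_eq_mul]
  rcases eq_or_ne i Istar with h | h
  · subst h
    simp only [if_neg hx, ite_true, ite_false, if_true, mul_zero, add_zero, mul_one, zero_add,
      zero_mul, eq_self_iff_true, if_pos rfl]
    simp only [Pi.add_apply, Pi.mul_apply]
    rw [div_pow]
    field_simp
    try ring
  · rcases eq_or_ne i x with h2 | h2
    · subst h2
      simp only [if_neg (Ne.symm h), ite_true, ite_false, if_true, mul_zero, add_zero, mul_one,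
        zero_add, zero_mul, eq_self_iff_true, if_pos rfl, if_neg h]
      simp only [Pi.add_apply, Pi.mul_apply]
      rw [div_pow]
      field_simp
      try ring
    · simp only [if_neg (Ne.symm h), if_neg (Ne.symm h2), if_neg h, if_neg h2, mul_zero,
        add_zero, mul_one, zero_add, zero_mul, mul_neg, neg_zero]
      try ring

lemma clarke_subset {K : ℕ} (θ : Fin K → ℝ) (σ : ℝ) (hσ : 0 < σ) (Istar x : Fin K)
    (hx : x ≠ Istar) (p : Fin K → ℝ) (g : Fin K → ℝ)
    (hg : g ∈ clarkeDg θ σ Istar x p) :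
    (∀ i, 0 ≤ g i ∧ g i ≤ (θ Istar - θ x) ^ 2 / (2 * σ ^ 2)) ∧
    (p Istar * p x = 0 →
      (∀ i, 0 < p i → g i = 0) ∧
      (θ Istar - θ x) ^ 2 / (2 * σ ^ 2) / 2 ≤
        ∑ i ∈ Finset.univ.filter (fun i => p i = 0), g i) := by
  set c := (θ Istar - θ x) ^ 2 / (2 * σ ^ 2) with hc
  have hcnn : 0 ≤ c := by positivity
  set S : Set (Fin K → ℝ) := {g | (∀ i, 0 ≤ g i ∧ g i ≤ c) ∧
    (p Istar * p x = 0 →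
      (∀ i, 0 < p i → g i = 0) ∧
      c / 2 ≤ ∑ i ∈ Finset.univ.filter (fun i => p i = 0), g i)} with hS
  suffices h : clarkeDg θ σ Istar x p ⊆ S by exact h hg
  apply convexHull_min
  · -- the base set of limiting gradients is contained in S
    rintro g ⟨pn, hpn, hlim, hglim⟩
    have hgrad : ∀ n, (fun n => gradDg θ σ Istar x (pn n)) n = Gfun θ σ Istar x (pn n) :=
      fun n => myGrad θ σ Istar x hx _ ((hpn n).2 Istar) ((hpn n).2 x)
    have hglim' : Tendsto (fun n => Gfun θ σ Istar x (pn n)) atTop (nhds g) :=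
      Filter.Tendsto.congr hgrad hglim
    have hco : ∀ i, Tendsto (fun n => Gfun θ σ Istar x (pn n) i) atTop (nhds (g i)) :=
      fun i => tendsto_pi_nhds.mp hglim' i
    have hpc : ∀ i, Tendsto (fun n => pn n i) atTop (nhds (p i)) :=
      fun i => tendsto_pi_nhds.mp hlim i
    have hpnn : ∀ i, 0 ≤ p i :=
      fun i => ge_of_tendsto' (hpc i) (fun n => le_of_lt ((hpn n).2 i))
    have key1 : ∀ a b : ℝ, 0 < a → 0 < b → (b / (a + b)) ^ 2 ≤ 1 := by
      intro a b ha hb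
      have h1 : b / (a + b) ≤ 1 := (div_le_one (by linarith)).mpr (by linarith)
      have h0 : 0 ≤ b / (a + b) := by positivity
      nlinarith
    have hbd : ∀ n i, 0 ≤ Gfun θ σ Istar x (pn n) i ∧ Gfun θ σ Istar x (pn n) i ≤ c := by
      intro n i
      have haI := (hpn n).2 Istar
      have hax := (hpn n).2 x
      unfold Gfun
      split_ifs with h1 h2
      · exact ⟨by positivity, by
          have := key1 (pn n Istar) (pn n x) haI hax
          nlinarith⟩
      · refine ⟨by positivity, ?_⟩
        have ha : pn n Istar / (pn n Istar + pn n x) ≤ 1 :=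
          (div_le_one (by linarith)).mpr (by linarith)
        have hb : (0:ℝ) ≤ pn n Istar / (pn n Istar + pn n x) := by positivity
        have h1 : (pn n Istar / (pn n Istar + pn n x)) ^ 2 ≤ 1 := by nlinarith
        calc (θ Istar - θ x) ^ 2 / (2 * σ ^ 2) * (pn n Istar / (pn n Istar + pn n x)) ^ 2
            ≤ (θ Istar - θ x) ^ 2 / (2 * σ ^ 2) * 1 :=
              mul_le_mul_of_nonneg_left h1 (by positivity)
          _ = c := by rw [hc]; ring
      · simpa using hcnn
    have hP1 : ∀ i, 0 ≤ g i ∧ g i ≤ c := fun i =>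
      ⟨ge_of_tendsto' (hco i) (fun n => (hbd n i).1),
       le_of_tendsto' (hco i) (fun n => (hbd n i).2)⟩
    have hzero : ∀ i, i ≠ Istar → i ≠ x → g i = 0 := by
      intro i hi1 hi2
      have h := hco i
      simp only [Gfun, if_neg hi1, if_neg hi2, mul_zero] at h
      exact (tendsto_nhds_unique h tendsto_const_nhds)
    refine ⟨hP1, fun hZx => ?_⟩
    by_cases hpI : p Istar = 0
    · by_cases hpx : p x = 0
      · -- both zero
        refine ⟨?_, ?_⟩
        · intro i hpi
          have hi1 : i ≠ Istar := fun h => by rw [h] at hpi; exact absurd hpI hpi.ne'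
          have hi2 : i ≠ x := fun h => by rw [h] at hpi; exact absurd hpx hpi.ne'
          exact hzero i hi1 hi2
        · have hIx : Istar ≠ x := Ne.symm hx
          have hmemI : Istar ∈ Finset.univ.filter (fun i => p i = 0) := by simp [hpI]
          have hmemx : x ∈ Finset.univ.filter (fun i => p i = 0) := by simp [hpx]
          have hsub : ({Istar, x} : Finset (Fin K)) ⊆
              Finset.univ.filter (fun i => p i = 0) := by
            intro j hj
            rcases Finset.mem_insert.mp hj with h | h
            · exact h ▸ hmemI
            · exact (Finset.mem_singleton.mp h) ▸ hmemx
          have hle : g Istar + g x ≤ ∑ i ∈ Finset.univ.filter (fun i => p i = 0), g i := by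
            calc g Istar + g x = ∑ i ∈ ({Istar, x} : Finset (Fin K)), g i :=
                  (Finset.sum_pair hIx).symm
              _ ≤ _ := Finset.sum_le_sum_of_subset_of_nonneg hsub
                  (fun i _ _ => (hP1 i).1)
          have key2 : ∀ a b : ℝ, 0 < a → 0 < b →
              1 / 2 ≤ (b / (a + b)) ^ 2 + (a / (a + b)) ^ 2 := by
            intro a b ha hb
            have hs : (0:ℝ) < a + b := by linarith
            rw [div_pow, div_pow, ← add_div, le_div_iff₀ (by positivity)]
            nlinarith [sq_nonneg (a - b)]
          have hge : c / 2 ≤ g Istar + g x := by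
            refine ge_of_tendsto' ((hco Istar).add (hco x)) (fun n => ?_)
            have haI := (hpn n).2 Istar
            have hax := (hpn n).2 x
            have h2 := key2 (pn n Istar) (pn n x) haI hax
            have hval : Gfun θ σ Istar x (pn n) Istar + Gfun θ σ Istar x (pn n) x =
                c * ((pn n x / (pn n Istar + pn n x)) ^ 2 +
                  (pn n Istar / (pn n Istar + pn n x)) ^ 2) := by
              unfold Gfun
              rw [if_pos rfl, if_neg hx, if_pos rfl]
              ring
            rw [hval]
            calc c / 2 = c * (1 / 2) := by ring
              _ ≤ _ := mul_le_mul_of_nonneg_left h2 hcnn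
          linarith
      · -- p Istar = 0, p x > 0
        have hpxpos : 0 < p x := lt_of_le_of_ne (hpnn x) (Ne.symm hpx)
        have hsne : p Istar + p x ≠ 0 := by rw [hpI]; simpa using hpx
        have hgI : g Istar = c := by
          have hratio : Tendsto (fun n => Gfun θ σ Istar x (pn n) Istar) atTop
              (nhds (c * (p x / (p Istar + p x)) ^ 2)) := by
            have := (((hpc x).div ((hpc Istar).add (hpc x)) hsne).pow 2).const_mul c
            simpa [Gfun] using this
          have heq := tendsto_nhds_unique (hco Istar) hratio
          rw [heq, hpI]
          field_simp
          ring
        have hgx : g x = 0 := by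
          have hratio : Tendsto (fun n => Gfun θ σ Istar x (pn n) x) atTop
              (nhds (c * (p Istar / (p Istar + p x)) ^ 2)) := by
            have := (((hpc Istar).div ((hpc Istar).add (hpc x)) hsne).pow 2).const_mul c
            simpa [Gfun, if_neg hx] using this
          have heq := tendsto_nhds_unique (hco x) hratio
          rw [heq, hpI]
          simp
        refine ⟨?_, ?_⟩
        · intro i hpi
          have hi1 : i ≠ Istar := fun h => by rw [h] at hpi; exact absurd hpI hpi.ne'
          rcases eq_or_ne i x with h2 | h2
          · rw [h2]; exact hgx
          · exact hzero i hi1 h2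
        · have hmemI : Istar ∈ Finset.univ.filter (fun i => p i = 0) := by simp [hpI]
          have hle := Finset.single_le_sum (f := g)
            (fun i _ => (hP1 i).1) hmemI
          rw [hgI] at hle
          linarith
    · -- p Istar > 0, hence p x = 0
      have hpx : p x = 0 := by
        rcases mul_eq_zero.mp hZx with h | h
        · exact absurd h hpI
        · exact h
      have hpIpos : 0 < p Istar := lt_of_le_of_ne (hpnn Istar) (Ne.symm hpI)
      have hsne : p Istar + p x ≠ 0 := by rw [hpx]; simpa using hpI
      have hgx : g x = c := by
        have hratio : Tendsto (fun n => Gfun θ σ Istar x (pn n) x) atTop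
            (nhds (c * (p Istar / (p Istar + p x)) ^ 2)) := by
          have := (((hpc Istar).div ((hpc Istar).add (hpc x)) hsne).pow 2).const_mul c
          simpa [Gfun, if_neg hx] using this
        have heq := tendsto_nhds_unique (hco x) hratio
        rw [heq, hpx]
        field_simp
        ring
      have hgI : g Istar = 0 := by
        have hratio : Tendsto (fun n => Gfun θ σ Istar x (pn n) Istar) atTop
            (nhds (c * (p x / (p Istar + p x)) ^ 2)) := by
          have := (((hpc x).div ((hpc Istar).add (hpc x)) hsne).pow 2).const_mul c
          simpa [Gfun] using this
        have heq := tendsto_nhds_unique (hco Istar) hratio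
        rw [heq, hpx]
        simp
      refine ⟨?_, ?_⟩
      · intro i hpi
        rcases eq_or_ne i Istar with h1 | h1
        · rw [h1]; exact hgI
        · have hi2 : i ≠ x := fun h => by rw [h] at hpi; exact absurd hpx hpi.ne'
          exact hzero i h1 hi2
      · have hmemx : x ∈ Finset.univ.filter (fun i => p i = 0) := by simp [hpx]
        have hle := Finset.single_le_sum (f := g)
          (fun i _ => (hP1 i).1) hmemx
        rw [hgx] at hle
        linarith
  · -- S is convex
    intro g₁ h₁ g₂ h₂ a b ha hb hab
    constructor
    · intro i
      have A := h₁.1 i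
      have B := h₂.1 i
      have hv : (a • g₁ + b • g₂) i = a * g₁ i + b * g₂ i := rfl
      rw [hv]
      constructor
      · nlinarith [A.1, B.1]
      · nlinarith [A.2, B.2]
    · intro hz
      refine ⟨fun i hpi => ?_, ?_⟩
      · have hv : (a • g₁ + b • g₂) i = a * g₁ i + b * g₂ i := rfl
        rw [hv, (h₁.2 hz).1 i hpi, (h₂.2 hz).1 i hpi]
        ring
      · have hv : ∀ i, (a • g₁ + b • g₂) i = a * g₁ i + b * g₂ i := fun _ => rfl
        have hsum : ∑ i ∈ Finset.univ.filter (fun i => p i = 0), (a • g₁ + b • g₂) i =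
            a * ∑ i ∈ Finset.univ.filter (fun i => p i = 0), g₁ i +
            b * ∑ i ∈ Finset.univ.filter (fun i => p i = 0), g₂ i := by
          simp only [hv, Finset.sum_add_distrib, Finset.mul_sum]
        rw [hsum]
        nlinarith [(h₁.2 hz).2, (h₂.2 hz).2]

/-- zero-coordinate dominance in Gaussian BAI. With
`κ_x = (θ_{I*}−θ_x)²/(8σ²)`, `κ_min = min_x κ_x`, `M = max_x (θ_{I*}−θ_x)²/(2σ²)` and
`ε₀ = min{1/2, κ_min/(4KM)}`, if `p ∈ Δ_K` has nonempty zero-information set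
`Z = {x : p_{I*} p_x = 0}` and `μ ∈ Δ_X` puts mass at most `ε₀` outside `Z`, then every
`f = ∑_x μ_x g^{(x)}` with `g^{(x)} ∈ ∂°D(·,x)(p)` satisfies
`max_{i : p_i = 0} f_i ≥ κ_min/(2K)`, `max_{i : p_i > 0} f_i ≤ ε₀ M ≤ κ_min/(4K)`, and
every maximizer of `f` has `p_i = 0`. -/
theorem stmt_10 {K : ℕ} (θ : Fin K → ℝ) (Istar : Fin K)
    (hmax : ∀ j ≠ Istar, θ j < θ Istar) (σ : ℝ) (hσ : 0 < σ)
    (κmin M ε₀ : ℝ)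
    (hκ : κmin = ⨅ x : {x : Fin K // x ≠ Istar}, (θ Istar - θ x.1) ^ 2 / (8 * σ ^ 2))
    (hM : M = ⨆ x : {x : Fin K // x ≠ Istar}, (θ Istar - θ x.1) ^ 2 / (2 * σ ^ 2))
    (hε₀ : ε₀ = min (1 / 2) (κmin / (4 * K * M)))
    (p : Fin K → ℝ) (hp : p ∈ stdSimplex ℝ (Fin K))
    (hZ : ∃ x : {x : Fin K // x ≠ Istar}, p Istar * p x.1 = 0)
    (μ : {x : Fin K // x ≠ Istar} → ℝ) (hμ : μ ∈ stdSimplex ℝ {x : Fin K // x ≠ Istar})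
    (hmass : ∑ x : {x : Fin K // x ≠ Istar},
      (if p Istar * p x.1 = 0 then 0 else μ x) ≤ ε₀)
    (g : {x : Fin K // x ≠ Istar} → (Fin K → ℝ))
    (hg : ∀ x : {x : Fin K // x ≠ Istar}, g x ∈ clarkeDg θ σ Istar x.1 p)
    (f : Fin K → ℝ) (hf : f = fun i => ∑ x : {x : Fin K // x ≠ Istar}, μ x * g x i) :
    (∃ i, p i = 0 ∧ κmin / (2 * K) ≤ f i) ∧
    (∀ i, 0 < p i → f i ≤ ε₀ * M) ∧
    ε₀ * M ≤ κmin / (4 * K) ∧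
    (∀ i, (∀ j, f j ≤ f i) → p i = 0) := by
  have hprop := fun x : {x : Fin K // x ≠ Istar} =>
    clarke_subset θ σ hσ Istar x.1 x.2 p (g x) (hg x)
  have hfi : ∀ i, f i = ∑ x : {x : Fin K // x ≠ Istar}, μ x * g x i := fun i => by rw [hf]
  clear hf
  obtain ⟨x₀, hx₀⟩ := hZ
  haveI hne : Nonempty {x : Fin K // x ≠ Istar} := ⟨x₀⟩
  have hKpos : 0 < K := Nat.pos_of_ne_zero (by rintro rfl; exact Istar.elim0)
  have hK : 0 < (K : ℝ) := by exact_mod_cast hKpos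
  have hcpos : ∀ x : {x : Fin K // x ≠ Istar}, 0 < (θ Istar - θ x.1) ^ 2 / (2 * σ ^ 2) := by
    intro x
    have hd : θ Istar - θ x.1 ≠ 0 := sub_ne_zero.mpr (ne_of_gt (hmax x.1 x.2))
    positivity
  have hκle : ∀ x : {x : Fin K // x ≠ Istar},
      κmin ≤ (θ Istar - θ x.1) ^ 2 / (8 * σ ^ 2) := by
    intro x
    rw [hκ]
    exact ciInf_le (Set.Finite.bddBelow (Set.finite_range _)) x
  have hκpos : 0 < κmin := by
    obtain ⟨x₁, hx₁⟩ := exists_eq_ciInf_of_finite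
      (f := fun x : {x : Fin K // x ≠ Istar} => (θ Istar - θ x.1) ^ 2 / (8 * σ ^ 2))
    rw [hκ, ← hx₁]
    have hd : θ Istar - θ x₁.1 ≠ 0 := sub_ne_zero.mpr (ne_of_gt (hmax x₁.1 x₁.2))
    positivity
  have hMle : ∀ x : {x : Fin K // x ≠ Istar},
      (θ Istar - θ x.1) ^ 2 / (2 * σ ^ 2) ≤ M := by
    intro x
    rw [hM]
    exact le_ciSup (f := fun x : {x : Fin K // x ≠ Istar} => (θ Istar - θ x.1) ^ 2 / (2 * σ ^ 2))
      (Set.Finite.bddAbove (Set.finite_range _)) x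
  have hMpos : 0 < M := lt_of_lt_of_le (hcpos x₀) (hMle x₀)
  have hε1 : ε₀ ≤ 1 / 2 := hε₀ ▸ min_le_left _ _
  have hε2 : ε₀ ≤ κmin / (4 * K * M) := hε₀ ▸ min_le_right _ _
  set Zf := Finset.univ.filter (fun i => p i = 0) with hZf
  have hhalf : ∀ x : {x : Fin K // x ≠ Istar},
      2 * κmin ≤ (θ Istar - θ x.1) ^ 2 / (2 * σ ^ 2) / 2 := by
    intro x
    have h1 := hκle x
    have h2 : (θ Istar - θ x.1) ^ 2 / (2 * σ ^ 2) / 2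
        = 2 * ((θ Istar - θ x.1) ^ 2 / (8 * σ ^ 2)) := by
      field_simp
      ring
    rw [h2]
    linarith
  have hsplit : ∑ x : {x : Fin K // x ≠ Istar}, (if p Istar * p x.1 = 0 then μ x else 0) +
      ∑ x : {x : Fin K // x ≠ Istar}, (if p Istar * p x.1 = 0 then 0 else μ x) = 1 := by
    rw [← Finset.sum_add_distrib]
    rw [← hμ.2]
    apply Finset.sum_congr rfl
    intro x _
    split_ifs <;> ring
  have hmZ : 1 - ε₀ ≤ ∑ x : {x : Fin K // x ≠ Istar},
      (if p Istar * p x.1 = 0 then μ x else 0) := by linarith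
  have hsumZf : κmin ≤ ∑ i ∈ Zf, f i := by
    have h0 : ∑ i ∈ Zf, f i = ∑ i ∈ Zf, ∑ x : {x : Fin K // x ≠ Istar}, μ x * g x i :=
      Finset.sum_congr rfl (fun i _ => hfi i)
    have h1 : ∑ i ∈ Zf, ∑ x : {x : Fin K // x ≠ Istar}, μ x * g x i
        = ∑ x : {x : Fin K // x ≠ Istar}, μ x * ∑ i ∈ Zf, g x i := by
      rw [Finset.sum_comm]
      simp [Finset.mul_sum]
    rw [h0, h1]
    have h2 : ∀ x : {x : Fin K // x ≠ Istar},
        (if p Istar * p x.1 = 0 then μ x else 0) * (2 * κmin) ≤ μ x * ∑ i ∈ Zf, g x i := by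
      intro x
      by_cases hz : p Istar * p x.1 = 0
      · rw [if_pos hz]
        have hsum := ((hprop x).2 hz).2
        have hle : 2 * κmin ≤ ∑ i ∈ Zf, g x i := le_trans (hhalf x) hsum
        exact mul_le_mul_of_nonneg_left hle (hμ.1 x)
      · rw [if_neg hz, zero_mul]
        exact mul_nonneg (hμ.1 x) (Finset.sum_nonneg fun i _ => ((hprop x).1 i).1)
    have h3 : ∑ x : {x : Fin K // x ≠ Istar}, (if p Istar * p x.1 = 0 then μ x else 0) * (2 * κmin)
        ≤ ∑ x : {x : Fin K // x ≠ Istar}, μ x * ∑ i ∈ Zf, g x i :=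
      Finset.sum_le_sum (fun x _ => h2 x)
    rw [← Finset.sum_mul] at h3
    nlinarith [hmZ, hε1, hκpos, h3]
  have hZfne : Zf.Nonempty := by
    rcases mul_eq_zero.mp hx₀ with h | h
    · exact ⟨Istar, by simp [hZf, h]⟩
    · exact ⟨x₀.1, by simp [hZf, h]⟩
  have hcard : (Zf.card : ℝ) ≤ K := by
    have := Finset.card_filter_le Finset.univ (fun i => p i = 0)
    have h2 : (Finset.univ : Finset (Fin K)).card = K := by simp
    exact_mod_cast le_trans this (le_of_eq h2)
  have hex : ∃ i ∈ Zf, κmin / (2 * K) ≤ f i := by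
    by_contra hcon
    push_neg at hcon
    have h5 : ∑ i ∈ Zf, f i < Zf.card * (κmin / (2 * K)) := by
      have := Finset.sum_lt_sum_of_nonempty hZfne hcon
      simpa [Finset.sum_const, nsmul_eq_mul] using this
    have h6 : (Zf.card : ℝ) * (κmin / (2 * K)) ≤ κmin := by
      have ha : (Zf.card : ℝ) * (κmin / (2 * K)) ≤ K * (κmin / (2 * K)) :=
        mul_le_mul_of_nonneg_right hcard (by positivity)
      have hb : (K : ℝ) * (κmin / (2 * K)) = κmin / 2 := by
        field_simp
      linarith
    linarith [hsumZf]
  obtain ⟨i₀, hi₀Z, hi₀⟩ := hex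
  have hi₀p : p i₀ = 0 := by
    have := Finset.mem_filter.mp hi₀Z
    exact this.2
  have hclaim2 : ∀ i, 0 < p i → f i ≤ ε₀ * M := by
    intro i hpi
    rw [hfi i]
    have h2 : ∀ x : {x : Fin K // x ≠ Istar},
        μ x * g x i ≤ (if p Istar * p x.1 = 0 then 0 else μ x) * M := by
      intro x
      by_cases hz : p Istar * p x.1 = 0
      · rw [if_pos hz, zero_mul, ((hprop x).2 hz).1 i hpi, mul_zero]
      · rw [if_neg hz]
        exact mul_le_mul_of_nonneg_left (le_trans ((hprop x).1 i).2 (hMle x)) (hμ.1 x)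
    calc (∑ x : {x : Fin K // x ≠ Istar}, μ x * g x i)
        ≤ ∑ x : {x : Fin K // x ≠ Istar}, (if p Istar * p x.1 = 0 then 0 else μ x) * M :=
          Finset.sum_le_sum (fun x _ => h2 x)
      _ = (∑ x : {x : Fin K // x ≠ Istar}, (if p Istar * p x.1 = 0 then 0 else μ x)) * M :=
          (Finset.sum_mul _ _ _).symm
      _ ≤ ε₀ * M := mul_le_mul_of_nonneg_right hmass hMpos.le
  have hclaim3 : ε₀ * M ≤ κmin / (4 * K) := by
    have h1 := mul_le_mul_of_nonneg_right hε2 hMpos.le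
    have heq : κmin / (4 * K * M) * M = κmin / (4 * K) := by
      field_simp
    linarith
  refine ⟨⟨i₀, hi₀p, hi₀⟩, hclaim2, hclaim3, ?_⟩
  intro i hmaxi
  by_contra hnz
  have hpi : 0 < p i := lt_of_le_of_ne (hp.1 i) (Ne.symm hnz)
  have hub := hclaim2 i hpi
  have h7 := hmaxi i₀
  have h8 : κmin / (2 * K) ≤ ε₀ * M := le_trans hi₀ (le_trans h7 hub)
  have h9 : κmin / (2 * K) = 2 * (κmin / (4 * K)) := by
    field_simp
    ring
  have h10 : 0 < κmin / (4 * K) := by positivity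
  linarith
end

section
/- Let I₀ ⊆ {1,…,K} be nonempty, t₀ ∈ ℝ, and let p : [t₀, t₀ + log 2] → Δ_K be absolutely continuous with ṗ(s) = q(s) − p(s) for almost every s, where q(s) ∈ Δ_K satisfies q_j(s) = 0 for all j ∉ I₀. If Σ_{j∈I₀} p_j(t₀) = 0, then Σ_{j∈I₀} p_j(s) = 1 − e^{−(s−t₀)} for all s ∈ [t₀, t₀+log 2]; in particular Σ_{j∈I₀} p_j(t₀ + log 2) = 1/2, and hence there exists j ∈ I₀ with p_j(t₀ + log 2) ≥ 1/(2|I₀|). -/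
open MeasureTheory

/-- activation of zero coordinates. If `p : [t₀, t₀+log 2] → Δ_K` is
absolutely continuous (encoded in integral form) with `ṗ(s) = q(s) − p(s)` a.e., where
`q(s) ∈ Δ_K` is supported on `I₀`, and the total mass of `I₀` at time `t₀` is `0`, then
`∑_{j∈I₀} p_j(s) = 1 − e^{−(s−t₀)}` on the interval; in particular the mass at time
`t₀ + log 2` is `1/2`, so some `j ∈ I₀` has `p_j(t₀+log 2) ≥ 1/(2|I₀|)`. -/
theorem stmt_11 {K : ℕ} (I₀ : Finset (Fin K)) (hI₀ : I₀.Nonempty) (t₀ : ℝ)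
    (p q : ℝ → (Fin K → ℝ))
    (hmem : ∀ s ∈ Set.Icc t₀ (t₀ + Real.log 2), p s ∈ stdSimplex ℝ (Fin K))
    (hqmeas : Measurable q)
    (hq : ∀ᵐ s ∂(volume.restrict (Set.Icc t₀ (t₀ + Real.log 2))),
      q s ∈ stdSimplex ℝ (Fin K) ∧ ∀ j ∉ I₀, q s j = 0)
    (hpc : ContinuousOn p (Set.Icc t₀ (t₀ + Real.log 2)))
    (hode : ∀ s ∈ Set.Icc t₀ (t₀ + Real.log 2),
      p s = p t₀ + ∫ u in t₀..s, (q u - p u))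
    (hzero : ∑ j ∈ I₀, p t₀ j = 0) :
    (∀ s ∈ Set.Icc t₀ (t₀ + Real.log 2),
      ∑ j ∈ I₀, p s j = 1 - Real.exp (-(s - t₀))) ∧
    (∑ j ∈ I₀, p (t₀ + Real.log 2) j = 1 / 2) ∧
    (∃ j ∈ I₀, 1 / (2 * (I₀.card : ℝ)) ≤ p (t₀ + Real.log 2) j) := by
  set a := t₀ with ha_def
  set b := t₀ + Real.log 2 with hb_def
  have hlog : (0:ℝ) < Real.log 2 := Real.log_pos one_lt_two
  have hab : a ≤ b := by simp [hb_def, ha_def, hlog.le]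
  set F : ℝ → ℝ := fun s => ∑ j ∈ I₀, p s j with hF_def
  set G : ℝ → ℝ := fun s => 1 - Real.exp (-(s - t₀)) with hG_def
  -- continuity of F on Icc a b
  have hFc : ContinuousOn F (Set.Icc a b) := by
    exact continuousOn_finset_sum I₀ (fun j _ => (continuous_apply j).comp_continuousOn hpc)
  -- coordinate integrability
  have hqj : ∀ j, ∀ s ∈ Set.Icc a b,
      IntervalIntegrable (fun u => q u j) volume a s := by
    intro j s hs
    rw [intervalIntegrable_iff_integrableOn_Ioc_of_le hs.1]
    refine Integrable.mono' (integrable_const (1:ℝ))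
      ((measurable_pi_apply j).comp hqmeas).aestronglyMeasurable ?_
    have hsub : Set.Ioc a s ⊆ Set.Icc a b :=
      Set.Ioc_subset_Icc_self.trans (Set.Icc_subset_Icc_right hs.2)
    have := ae_restrict_of_ae_restrict_of_subset hsub hq
    filter_upwards [this] with u hu
    have h0 := hu.1.1 j
    have h1 : q u j ≤ 1 := by
      rw [← hu.1.2]
      exact Finset.single_le_sum (fun i _ => hu.1.1 i) (Finset.mem_univ j)
    rw [Real.norm_eq_abs, abs_of_nonneg h0]
    exact h1
  have hpj : ∀ j, ∀ s ∈ Set.Icc a b,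
      IntervalIntegrable (fun u => p u j) volume a s := by
    intro j s hs
    apply ContinuousOn.intervalIntegrable
    apply ((continuous_apply j).comp_continuousOn hpc).mono
    rw [Set.uIcc_of_le hs.1]
    exact Set.Icc_subset_Icc_right hs.2
  have hqpj : ∀ j, ∀ s ∈ Set.Icc a b,
      IntervalIntegrable (fun u => q u j - p u j) volume a s :=
    fun j s hs => (hqj j s hs).sub (hpj j s hs)
  -- Pi-valued integrability
  have hQP : ∀ s ∈ Set.Icc a b,
      IntervalIntegrable (fun u => q u - p u) volume a s := by
    intro s hs
    have hQ : IntervalIntegrable q volume a s := by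
      rw [intervalIntegrable_iff_integrableOn_Ioc_of_le hs.1]
      refine Integrable.mono' (integrable_const (1:ℝ)) hqmeas.aestronglyMeasurable ?_
      have hsub : Set.Ioc a s ⊆ Set.Icc a b :=
        Set.Ioc_subset_Icc_self.trans (Set.Icc_subset_Icc_right hs.2)
      filter_upwards [ae_restrict_of_ae_restrict_of_subset hsub hq] with u hu
      rw [pi_norm_le_iff_of_nonneg zero_le_one]
      intro j
      have h1 : q u j ≤ 1 := by
        rw [← hu.1.2]
        exact Finset.single_le_sum (fun i _ => hu.1.1 i) (Finset.mem_univ j)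
      rw [Real.norm_eq_abs, abs_of_nonneg (hu.1.1 j)]
      exact h1
    have hP : IntervalIntegrable p volume a s := by
      apply ContinuousOn.intervalIntegrable
      apply hpc.mono
      rw [Set.uIcc_of_le hs.1]
      exact Set.Icc_subset_Icc_right hs.2
    exact hQ.sub hP
  -- the key integral identity for F
  have hkey : ∀ s ∈ Set.Icc a b, F s = ∫ u in a..s, (1 - F u) := by
    intro s hs
    have h1 : F s = F a + ∑ j ∈ I₀, (∫ u in a..s, (q u - p u)) j := by
      simp only [hF_def]
      rw [← Finset.sum_add_distrib]
      exact Finset.sum_congr rfl fun j _ => by rw [hode s hs]; rfl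
    have h2 : ∀ j, (∫ u in a..s, (q u - p u)) j = ∫ u in a..s, (q u j - p u j) := by
      intro j
      have := (ContinuousLinearMap.proj (R := ℝ) (φ := fun _ : Fin K => ℝ) j
        ).intervalIntegral_comp_comm (hQP s hs)
      exact this.symm
    rw [h1]
    have hFa : F a = 0 := hzero
    rw [hFa]
    simp only [h2]
    rw [← intervalIntegral.integral_finset_sum (fun j _ => hqpj j s hs), zero_add]
    apply intervalIntegral.integral_congr_ae
    have hsub : Set.uIoc a s ⊆ Set.Icc a b := by
      rw [Set.uIoc_of_le hs.1]
      exact Set.Ioc_subset_Icc_self.trans (Set.Icc_subset_Icc_right hs.2)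
    filter_upwards [ae_imp_of_ae_restrict hq] with u hu hmemu
    obtain ⟨hsimp, hsupp⟩ := hu (hsub hmemu)
    have hqsum : ∑ j ∈ I₀, q u j = 1 := by
      rw [← hsimp.2]
      exact (Finset.sum_subset (Finset.subset_univ I₀)
        (fun j _ hj => hsupp j hj)).symm ▸ rfl
    rw [Finset.sum_sub_distrib, hqsum]
  -- derivatives
  have hderF : ∀ t ∈ Set.Ico a b, HasDerivWithinAt F ((fun _ x => 1 - x) t (F t)) (Set.Ici t) t := by
    intro t ht
    have htb : t ∈ Set.Icc a b := Set.mem_Icc_of_Ico ht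
    have hcF : ContinuousOn (fun u => 1 - F u) (Set.Icc a b) := continuousOn_const.sub hFc
    have hIcc : Set.Icc a b ∈ nhdsWithin t (Set.Ici t) := Icc_mem_nhdsGE_of_mem ht
    have hIoi : Set.Icc a b ∈ nhdsWithin t (Set.Ioi t) :=
      nhdsWithin_mono t Set.Ioi_subset_Ici_self hIcc
    have hint : IntervalIntegrable (fun u => 1 - F u) volume a t := by
      apply ContinuousOn.intervalIntegrable
      apply hcF.mono
      rw [Set.uIcc_of_le ht.1]
      exact Set.Icc_subset_Icc_right htb.2
    have hmeas : StronglyMeasurableAtFilter (fun u => 1 - F u) (nhdsWithin t (Set.Ioi t)) :=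
      ⟨Set.Icc a b, hIoi, hcF.aestronglyMeasurable measurableSet_Icc⟩
    have hcont : ContinuousWithinAt (fun u => 1 - F u) (Set.Ioi t) t :=
      (hcF t htb).mono_of_mem_nhdsWithin hIoi
    have hH : HasDerivWithinAt (fun s => ∫ u in a..s, (1 - F u)) (1 - F t) (Set.Ici t) t :=
      intervalIntegral.integral_hasDerivWithinAt_right hint hmeas hcont
    have hEq : F =ᶠ[nhdsWithin t (Set.Ici t)] (fun s => ∫ u in a..s, (1 - F u)) := by
      filter_upwards [hIcc] with u hu
      exact hkey u hu
    exact hH.congr_of_eventuallyEq hEq (hkey t htb)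
  have hderG : ∀ t ∈ Set.Ico a b, HasDerivWithinAt G ((fun _ x => 1 - x) t (G t)) (Set.Ici t) t := by
    intro t _
    have h1 : HasDerivAt (fun s : ℝ => -(s - t₀)) (-1) t := ((hasDerivAt_id t).sub_const t₀).neg
    have h2 : HasDerivAt (fun s : ℝ => Real.exp (-(s - t₀))) (Real.exp (-(t - t₀)) * (-1)) t :=
      h1.exp
    have h3 : HasDerivAt G (-(Real.exp (-(t - t₀)) * (-1))) t := h2.const_sub 1
    have h4 : HasDerivAt G (1 - G t) t := by
      convert h3 using 1
      simp [hG_def]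
    exact h4.hasDerivWithinAt
  -- Lipschitz vector field
  have hlip : ∀ t : ℝ, LipschitzOnWith 1 ((fun _ x => 1 - x : ℝ → ℝ → ℝ) t) Set.univ := by
    intro t
    refine LipschitzOnWith.mono (LipschitzWith.lipschitzOnWith ?_) (subset_refl _)
    apply LipschitzWith.of_dist_le_mul
    intro x y
    rw [Real.dist_eq, Real.dist_eq, NNReal.coe_one, one_mul,
      show (1:ℝ) - x - (1 - y) = -(x - y) by ring, abs_neg]
  -- uniqueness
  have hGc : ContinuousOn G (Set.Icc a b) := by
    apply Continuous.continuousOn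
    fun_prop
  have hFG : Set.EqOn F G (Set.Icc a b) := by
    apply ODE_solution_unique_of_mem_Icc_right (fun t _ => hlip t) hFc hderF (fun _ _ => Set.mem_univ _)
      hGc hderG (fun _ _ => Set.mem_univ _)
    have : F a = 0 := hzero
    rw [this]
    simp [hG_def, ha_def]
  have hmain : ∀ s ∈ Set.Icc t₀ (t₀ + Real.log 2),
      ∑ j ∈ I₀, p s j = 1 - Real.exp (-(s - t₀)) := fun s hs => hFG hs
  have hb_mem : b ∈ Set.Icc a b := Set.right_mem_Icc.mpr hab
  have hhalf : ∑ j ∈ I₀, p b j = 1 / 2 := by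
    rw [hmain b hb_mem]
    rw [show b - t₀ = Real.log 2 by rw [hb_def]; ring]
    rw [Real.exp_neg, Real.exp_log (by norm_num : (0:ℝ) < 2)]
    norm_num
  refine ⟨hmain, hhalf, ?_⟩
  have hcard : (0:ℝ) < (I₀.card : ℝ) := by
    exact_mod_cast Finset.card_pos.mpr hI₀
  apply Finset.exists_le_of_sum_le hI₀
  rw [Finset.sum_const, hhalf]
  rw [nsmul_eq_mul]
  rw [mul_one_div, div_le_div_iff₀ (by positivity) (by norm_num)]
  ring_nf
  nlinarith [hcard]
end

section
/- The function g(p) = p₂(p₁ + 4p₃)/(p₁ + p₂ + 4p₃) on the simplex Δ₃ (note the denominator equals 1 + 3p₃ > 0 on Δ₃) attains its maximum value 4/9, and p* = (0, 2/3, 1/3) is its unique maximizer; equivalently, the best-arm-identification maximin value (1/2)·max_{p∈Δ₃} g(p) equals 2/9. -/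
/-- the function `g(p) = p₂(p₁ + 4p₃)/(p₁ + p₂ + 4p₃)` on the simplex
`Δ₃` attains its maximum value `4/9`, with unique maximizer `p* = (0, 2/3, 1/3)`;
equivalently, the best-arm-identification maximin value `(1/2)·max_{p∈Δ₃} g(p)`
equals `2/9`. -/
theorem stmt_19
    (g : (Fin 3 → ℝ) → ℝ)
    (hg : ∀ p, g p = p 1 * (p 0 + 4 * p 2) / (p 0 + p 1 + 4 * p 2))
    (pstar : Fin 3 → ℝ) (hps : pstar = ![0, 2 / 3, 1 / 3]) :
    pstar ∈ stdSimplex ℝ (Fin 3) ∧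
    g pstar = 4 / 9 ∧
    (∀ p ∈ stdSimplex ℝ (Fin 3), g p ≤ 4 / 9) ∧
    (∀ p ∈ stdSimplex ℝ (Fin 3), g p = 4 / 9 → p = pstar) ∧
    (1 / 2) * (⨆ p : stdSimplex ℝ (Fin 3), g p.1) = 2 / 9 := by
  have hmem : pstar ∈ stdSimplex ℝ (Fin 3) := by
    subst hps
    constructor
    · intro i
      fin_cases i <;> norm_num
    · simp [Fin.sum_univ_three]
      norm_num
  have hval : g pstar = 4 / 9 := by
    rw [hg, hps]
    norm_num [Matrix.cons_val_two]
  have hbound : ∀ p ∈ stdSimplex ℝ (Fin 3), g p ≤ 4 / 9 := by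
    intro p hp
    obtain ⟨hpos, hsum⟩ := hp
    rw [Fin.sum_univ_three] at hsum
    have h0 := hpos 0
    have h1 := hpos 1
    have h2 := hpos 2
    have hD : (0:ℝ) < p 0 + p 1 + 4 * p 2 := by nlinarith
    rw [hg, div_le_iff₀ hD]
    nlinarith [sq_nonneg (2 * p 1 - 4 * p 2 - p 0), mul_nonneg h0 (by nlinarith : (0:ℝ) ≤ p 1 + 4 * p 2 + p 0)]
  have huniq : ∀ p ∈ stdSimplex ℝ (Fin 3), g p = 4 / 9 → p = pstar := by
    intro p hp heq
    obtain ⟨hpos, hsum⟩ := hp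
    rw [Fin.sum_univ_three] at hsum
    have h0 := hpos 0
    have h1 := hpos 1
    have h2 := hpos 2
    have hD : (0:ℝ) < p 0 + p 1 + 4 * p 2 := by nlinarith
    rw [hg, div_eq_iff (ne_of_gt hD)] at heq
    have hsq : (2 * p 1 - 4 * p 2 - p 0) ^ 2 + 3 * (p 0 * (p 1 + 4 * p 2 + p 0)) = 0 := by
      nlinarith
    have hsq1 : (2 * p 1 - 4 * p 2 - p 0) ^ 2 = 0 ∧ p 0 * (p 1 + 4 * p 2 + p 0) = 0 := by
      constructor <;> nlinarith [sq_nonneg (2 * p 1 - 4 * p 2 - p 0),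
        mul_nonneg h0 (by nlinarith : (0:ℝ) ≤ p 1 + 4 * p 2 + p 0)]
    have hp0 : p 0 = 0 := by
      rcases mul_eq_zero.mp hsq1.2 with h | h
      · exact h
      · nlinarith
    have h2141 : 2 * p 1 - 4 * p 2 - p 0 = 0 := by
      have := hsq1.1; nlinarith [sq_nonneg (2 * p 1 - 4 * p 2 - p 0)]
    have hp1 : p 1 = 2 / 3 := by nlinarith
    have hp2 : p 2 = 1 / 3 := by nlinarith
    subst hps
    funext i
    fin_cases i <;> simp [hp0, hp1, hp2]
  refine ⟨hmem, hval, hbound, huniq, ?_⟩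
  have hsup : (⨆ p : stdSimplex ℝ (Fin 3), g p.1) = 4 / 9 := by
    have : Nonempty (stdSimplex ℝ (Fin 3)) := ⟨⟨pstar, hmem⟩⟩
    apply le_antisymm
    · apply ciSup_le
      intro p
      exact hbound p.1 p.2
    · have := le_ciSup (f := fun p : stdSimplex ℝ (Fin 3) => g p.1)
        ⟨4 / 9, by rintro x ⟨p, rfl⟩; exact hbound p.1 p.2⟩ ⟨pstar, hmem⟩
      simpa [hval] using this
  rw [hsup]; norm_num
end
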